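/- arXiv:1803.03899 — 4 statements merged into one kernel-verified Lean document; each statement's English description precedes it below -/
import Mathlib

section
/- Generalized Koksma inequality: if g : [0,1] → ℝ is bounded and of bounded variation, F is a C¹ distribution function on [0,1] with 0 < c_F < F'(t) < C_F, D*_N is the star discrepancy of the points t_1,...,t_N with respect to F, and the weights w_i satisfy |w_i − 1| ≤ C·D*_N for all i, then |∫₀¹ g(t) dF(t) − (1/N)·Σ_{i=1}^N g(t_i)·w_i| ≤ (‖g‖_TV + C·‖g‖_∞)·D*_N. -/
open Set MeasureTheory

private lemma le_on_Icc_of_Ioo {φ : ℝ → ℝ} {a b M : ℝ} (hab : a < b)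
    (hc : ∀ s ∈ Icc a b, ContinuousAt φ s)
    (h : ∀ s ∈ Ioo a b, φ s ≤ M) : ∀ s ∈ Icc a b, φ s ≤ M := by
  intro s hs
  by_cases hsa : s = a
  · subst hsa
    have hne : (nhdsWithin s (Ioo s b)).NeBot := by
      rw [← mem_closure_iff_nhdsWithin_neBot, closure_Ioo hab.ne]
      exact ⟨le_rfl, hab.le⟩
    refine le_of_tendsto (x := nhdsWithin s (Ioo s b))
      ((hc s hs).tendsto.mono_left nhdsWithin_le_nhds) ?_
    exact eventually_mem_nhdsWithin.mono h
  by_cases hsb : s = b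
  · subst hsb
    have hne : (nhdsWithin s (Ioo a s)).NeBot := by
      rw [← mem_closure_iff_nhdsWithin_neBot, closure_Ioo hab.ne]
      exact ⟨hab.le, le_rfl⟩
    refine le_of_tendsto (x := nhdsWithin s (Ioo a s))
      ((hc s hs).tendsto.mono_left nhdsWithin_le_nhds) ?_
    refine eventually_mem_nhdsWithin.mono ?_
    intro u hu
    exact h u ⟨hu.1, hu.2⟩
  exact h s ⟨lt_of_le_of_ne hs.1 (Ne.symm hsa), lt_of_le_of_ne hs.2 hsb⟩

private lemma evar_chain (g : ℝ → ℝ) (y : ℕ → ℝ) :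
    ∀ n : ℕ, (∀ j < n, y j ≤ y (j + 1)) →
    ∑ j ∈ Finset.range n, eVariationOn g (Icc (y j) (y (j + 1)))
      = eVariationOn g (Icc (y 0) (y n)) := by
  intro n
  induction n with
  | zero =>
    intro _
    simp [eVariationOn.subsingleton g (by simp : (Icc (y 0) (y 0)).Subsingleton)]
  | succ n ih =>
    intro hy
    have hmono : ∀ i ≤ n, y 0 ≤ y i := by
      intro i hi
      induction i with
      | zero => exact le_rfl
      | succ i ih2 => exact (ih2 (by omega)).trans (hy i (by omega))
    rw [Finset.sum_range_succ, ih (fun j hj => hy j (by omega))]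
    have := eVariationOn.Icc_add_Icc g (s := univ) (hmono n le_rfl)
      (hy n (by omega)) (mem_univ (y n))
    simpa [univ_inter] using this

private lemma koksma_key (g F F' : ℝ → ℝ) (a b c D CF : ℝ) (hab : a ≤ b)
    (hFderiv : ∀ s ∈ Icc a b, HasDerivAt F (F' s) s)
    (hF'cont : ContinuousOn F' (Icc a b))
    (hCF : ∀ s ∈ Icc a b, |F' s| ≤ CF)
    (hgint : ∀ u v : ℝ, u ∈ Icc a b → v ∈ Icc a b → IntervalIntegrable g volume u v)
    (hgBV : BoundedVariationOn g (Icc a b))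
    (hD : ∀ s ∈ Icc a b, |F s - c| ≤ D) :
    |(F b - c) * g b - (F a - c) * g a - ∫ s in a..b, g s * F' s|
      ≤ D * (eVariationOn g (Icc a b)).toReal := by
  set V := (eVariationOn g (Icc a b)).toReal with hV
  have hD0 : 0 ≤ D := le_trans (abs_nonneg _) (hD a (left_mem_Icc.2 hab))
  have hCF0 : 0 ≤ CF := le_trans (abs_nonneg _) (hCF a (left_mem_Icc.2 hab))
  have hV0 : 0 ≤ V := ENNReal.toReal_nonneg
  have hfin : eVariationOn g (Icc a b) ≠ ⊤ := hgBV
  have key : ∀ n : ℕ, 0 < n →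
      |(F b - c) * g b - (F a - c) * g a - ∫ s in a..b, g s * F' s|
        ≤ D * V + CF * V * (b - a) / n := by
    intro n hn
    have hn0 : (n : ℝ) ≠ 0 := Nat.cast_ne_zero.2 hn.ne'
    set δ := (b - a) / n with hδ
    have hδ0 : 0 ≤ δ := div_nonneg (by linarith) (Nat.cast_nonneg n)
    set p : ℕ → ℝ := fun j => a + j * δ with hp
    have hpmono : Monotone p := by
      intro i j hij
      have h1 : (i : ℝ) ≤ j := Nat.cast_le.2 hij
      simp only [hp]
      nlinarith
    have hp0 : p 0 = a := by simp [hp]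
    have hpn : p n = b := by
      simp only [hp, hδ]
      field_simp
      ring
    have hpmem : ∀ j ≤ n, p j ∈ Icc a b := fun j hj =>
      ⟨by rw [← hp0]; exact hpmono (Nat.zero_le j), by rw [← hpn]; exact hpmono hj⟩
    have hstepeq : ∀ j : ℕ, p (j + 1) - p j = δ := by
      intro j
      simp only [hp]
      push_cast
      ring
    have hintj : ∀ j < n, IntervalIntegrable (fun t => g t * F' t) volume (p j) (p (j + 1)) := by
      intro j hj
      have hsub : uIcc (p j) (p (j + 1)) ⊆ Icc a b := by
        rw [uIcc_of_le (hpmono (Nat.le_succ j))]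
        exact Icc_subset_Icc (hpmem j hj.le).1 (hpmem (j + 1) hj).2
      exact (hgint _ _ (hpmem j hj.le) (hpmem (j + 1) hj)).mul_continuousOn (hF'cont.mono hsub)
    have hF'intj : ∀ j < n, IntervalIntegrable F' volume (p j) (p (j + 1)) := by
      intro j hj
      have hsub : uIcc (p j) (p (j + 1)) ⊆ Icc a b := by
        rw [uIcc_of_le (hpmono (Nat.le_succ j))]
        exact Icc_subset_Icc (hpmem j hj.le).1 (hpmem (j + 1) hj).2
      exact (hF'cont.mono hsub).intervalIntegrable
    have hident : (F b - c) * g b - (F a - c) * g a - ∫ s in a..b, g s * F' s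
        = ∑ j ∈ Finset.range n, ((F (p (j + 1)) - c) * (g (p (j + 1)) - g (p j))
            + ∫ t in p j..p (j + 1), (g (p j) - g t) * F' t) := by
      have hsplit : ∑ j ∈ Finset.range n, ∫ t in p j..p (j + 1), g t * F' t
          = ∫ t in a..b, g t * F' t := by
        rw [← hp0, ← hpn]
        exact intervalIntegral.sum_integral_adjacent_intervals (fun k hk => hintj k hk)
      have hterm : ∀ j < n, (F (p (j + 1)) - c) * (g (p (j + 1)) - g (p j))
            + ∫ t in p j..p (j + 1), (g (p j) - g t) * F' t
          = ((F (p (j + 1)) - c) * g (p (j + 1)) - (F (p j) - c) * g (p j))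
            - ∫ t in p j..p (j + 1), g t * F' t := by
        intro j hj
        have hsub : uIcc (p j) (p (j + 1)) ⊆ Icc a b := by
          rw [uIcc_of_le (hpmono (Nat.le_succ j))]
          exact Icc_subset_Icc (hpmem j hj.le).1 (hpmem (j + 1) hj).2
        have hftc : ∫ t in p j..p (j + 1), F' t = F (p (j + 1)) - F (p j) :=
          intervalIntegral.integral_eq_sub_of_hasDerivAt
            (fun x hx => hFderiv x (hsub hx)) (hF'intj j hj)
        have heq : (fun t => (g (p j) - g t) * F' t)
            = fun t => g (p j) * F' t - g t * F' t := by
          funext t; ring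
        rw [heq, intervalIntegral.integral_sub ((hF'intj j hj).const_mul _) (hintj j hj),
          intervalIntegral.integral_const_mul, hftc]
        ring
      rw [Finset.sum_congr rfl (fun j hj => hterm j (Finset.mem_range.1 hj)),
        Finset.sum_sub_distrib, Finset.sum_range_sub (fun j => (F (p j) - c) * g (p j)),
        hsplit, hp0, hpn]
    have hvfin : ∀ j, j < n → eVariationOn g (Icc (p j) (p (j + 1))) ≠ ⊤ := by
      intro j hj
      exact ne_top_of_le_ne_top hfin
        (eVariationOn.mono g (Icc_subset_Icc (hpmem j hj.le).1 (hpmem (j + 1) hj).2))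
    have hbound : ∀ j < n, |(F (p (j + 1)) - c) * (g (p (j + 1)) - g (p j))
            + ∫ t in p j..p (j + 1), (g (p j) - g t) * F' t|
        ≤ (D + CF * δ) * (eVariationOn g (Icc (p j) (p (j + 1)))).toReal := by
      intro j hj
      set v := (eVariationOn g (Icc (p j) (p (j + 1)))).toReal with hv
      have hv0 : 0 ≤ v := ENNReal.toReal_nonneg
      have hle : p j ≤ p (j + 1) := hpmono (Nat.le_succ j)
      have hsub : Icc (p j) (p (j + 1)) ⊆ Icc a b :=
        Icc_subset_Icc (hpmem j hj.le).1 (hpmem (j + 1) hj).2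
      have hstep : ∀ u ∈ Icc (p j) (p (j + 1)), ∀ z ∈ Icc (p j) (p (j + 1)),
          |g u - g z| ≤ v := by
        intro u hu z hz
        have h1 := eVariationOn.edist_le g hu hz
        have h2 := ENNReal.toReal_mono (hvfin j hj) h1
        rwa [edist_dist, ENNReal.toReal_ofReal dist_nonneg, Real.dist_eq] at h2
      have h1 : |(F (p (j + 1)) - c) * (g (p (j + 1)) - g (p j))| ≤ D * v := by
        rw [abs_mul]
        exact mul_le_mul (hD _ (hpmem (j + 1) hj))
          (hstep _ (right_mem_Icc.2 hle) _ (left_mem_Icc.2 hle)) (abs_nonneg _) hD0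
      have h2 : |∫ t in p j..p (j + 1), (g (p j) - g t) * F' t| ≤ v * CF * δ := by
        have hb := intervalIntegral.norm_integral_le_of_norm_le_const (C := v * CF)
          (f := fun t => (g (p j) - g t) * F' t) (a := p j) (b := p (j + 1)) ?_
        · rw [Real.norm_eq_abs] at hb
          have : |p (j + 1) - p j| = δ := by rw [hstepeq j, abs_of_nonneg hδ0]
          rw [this] at hb
          linarith [hb]
        · intro x hx
          rw [uIoc_of_le hle] at hx
          have hxmem : x ∈ Icc (p j) (p (j + 1)) := ⟨hx.1.le, hx.2⟩
          rw [Real.norm_eq_abs, abs_mul]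
          exact mul_le_mul (hstep _ (left_mem_Icc.2 hle) _ hxmem)
            (hCF x (hsub hxmem)) (abs_nonneg _) hv0
      calc |(F (p (j + 1)) - c) * (g (p (j + 1)) - g (p j))
            + ∫ t in p j..p (j + 1), (g (p j) - g t) * F' t|
          ≤ |(F (p (j + 1)) - c) * (g (p (j + 1)) - g (p j))|
            + |∫ t in p j..p (j + 1), (g (p j) - g t) * F' t| := abs_add_le _ _
        _ ≤ D * v + v * CF * δ := add_le_add h1 h2
        _ = (D + CF * δ) * v := by ring
    have hsumv : ∑ j ∈ Finset.range n, (eVariationOn g (Icc (p j) (p (j + 1)))).toReal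
        = V := by
      rw [← ENNReal.toReal_sum (fun j hj => hvfin j (Finset.mem_range.1 hj)),
        evar_chain g p n (fun j hj => hpmono (Nat.le_succ j)), hp0, hpn]
    calc |(F b - c) * g b - (F a - c) * g a - ∫ s in a..b, g s * F' s|
        = |∑ j ∈ Finset.range n, ((F (p (j + 1)) - c) * (g (p (j + 1)) - g (p j))
            + ∫ t in p j..p (j + 1), (g (p j) - g t) * F' t)| := by rw [hident]
      _ ≤ ∑ j ∈ Finset.range n, |(F (p (j + 1)) - c) * (g (p (j + 1)) - g (p j))
            + ∫ t in p j..p (j + 1), (g (p j) - g t) * F' t| :=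
          Finset.abs_sum_le_sum_abs _ _
      _ ≤ ∑ j ∈ Finset.range n,
            (D + CF * δ) * (eVariationOn g (Icc (p j) (p (j + 1)))).toReal :=
          Finset.sum_le_sum (fun j hj => hbound j (Finset.mem_range.1 hj))
      _ = (D + CF * δ) * V := by rw [← Finset.mul_sum, hsumv]
      _ = D * V + CF * V * (b - a) / n := by rw [hδ]; ring
  refine le_of_forall_pos_le_add ?_
  intro ε hε
  obtain ⟨n, hn⟩ := exists_nat_gt (CF * V * (b - a) / ε)
  have h1 := key (n + 1) (Nat.succ_pos n)
  have h2 : CF * V * (b - a) / (n + 1 : ℕ) ≤ ε := by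
    have hpos : (0 : ℝ) < (n + 1 : ℕ) := by positivity
    rw [div_le_iff₀ hpos]
    have h3 : CF * V * (b - a) / ε < (n + 1 : ℕ) := by
      push_cast
      push_cast at hn
      linarith
    rw [div_lt_iff₀ hε] at h3
    linarith
  linarith

/-- Generalized Koksma inequality with nonuniform weights and a nonuniform
C¹ distribution `F` with `0 < c_F < F' < C_F`. -/
theorem generalized_koksma (N : ℕ) (hN : 0 < N)
    (t : Fin N → ℝ) (ht : ∀ i, t i ∈ Icc (0:ℝ) 1)
    (g : ℝ → ℝ) (hgbd : BddAbove ((fun s => |g s|) '' Icc (0:ℝ) 1))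
    (hgBV : BoundedVariationOn g (Icc (0:ℝ) 1))
    (F F' : ℝ → ℝ) (cF CF : ℝ) (hcF : 0 < cF)
    (hF0 : F 0 = 0) (hF1 : F 1 = 1)
    (hFderiv : ∀ s ∈ Icc (0:ℝ) 1, HasDerivAt F (F' s) s)
    (hF'cont : ContinuousOn F' (Icc (0:ℝ) 1))
    (hbnd : ∀ s ∈ Icc (0:ℝ) 1, cF < F' s ∧ F' s < CF)
    (FN : ℝ → ℝ)
    (hFN : ∀ s, FN s = ((Finset.univ.filter (fun i => t i ≤ s)).card : ℝ) / N)
    (DN : ℝ) (hDN : DN = sSup ((fun s => |FN s - F s|) '' Icc (0:ℝ) 1))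
    (C : ℝ) (hC : 0 ≤ C) (w : Fin N → ℝ) (hw : ∀ i, |w i - 1| ≤ C * DN) :
    |(∫ s in (0:ℝ)..1, g s * F' s) - (1 / N) * ∑ i, g (t i) * w i| ≤
      ((eVariationOn g (Icc (0:ℝ) 1)).toReal
        + C * sSup ((fun s => |g s|) '' Icc (0:ℝ) 1)) * DN := by
  have hN0 : (N : ℝ) ≠ 0 := Nat.cast_ne_zero.2 hN.ne'
  have hNpos : (0:ℝ) < N := Nat.cast_pos.2 hN
  set S := sSup ((fun s => |g s|) '' Icc (0:ℝ) 1) with hS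
  set V := (eVariationOn g (Icc (0:ℝ) 1)).toReal with hVdef
  have hgS : ∀ s ∈ Icc (0:ℝ) 1, |g s| ≤ S := fun s hs => le_csSup hgbd ⟨s, hs, rfl⟩
  have hS0 : 0 ≤ S := le_trans (abs_nonneg _) (hgS 0 (by norm_num))
  have hCF' : ∀ s ∈ Icc (0:ℝ) 1, |F' s| ≤ CF := by
    intro s hs
    have h := hbnd s hs
    rw [abs_of_pos (lt_trans hcF h.1)]
    exact h.2.le
  -- continuity and monotonicity of F
  have hFcont : ∀ s ∈ Icc (0:ℝ) 1, ContinuousAt F s := fun s hs => (hFderiv s hs).continuousAt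
  have hFmono : MonotoneOn F (Icc (0:ℝ) 1) := by
    refine (strictMonoOn_of_deriv_pos (convex_Icc 0 1)
      (fun s hs => (hFcont s hs).continuousWithinAt) ?_).monotoneOn
    intro s hs
    rw [interior_Icc] at hs
    rw [(hFderiv s (Ioo_subset_Icc_self hs)).deriv]
    exact lt_trans hcF (hbnd s (Ioo_subset_Icc_self hs)).1
  have hF01 : ∀ s ∈ Icc (0:ℝ) 1, F s ∈ Icc (0:ℝ) 1 := by
    intro s hs
    constructor
    · rw [← hF0]; exact hFmono (by norm_num) hs hs.1
    · rw [← hF1]; exact hFmono hs (by norm_num) hs.2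
  -- FN in [0,1]
  have hFN01 : ∀ s, FN s ∈ Icc (0:ℝ) 1 := by
    intro s
    rw [hFN s]
    constructor
    · positivity
    · rw [div_le_one hNpos]
      exact_mod_cast (Finset.card_filter_le _ _).trans (by simp)
  -- DN bounds
  have hDNbdd : BddAbove ((fun s => |FN s - F s|) '' Icc (0:ℝ) 1) := by
    refine ⟨2, ?_⟩
    rintro _ ⟨s, hs, rfl⟩
    have h1 := hFN01 s
    have h2 := hF01 s hs
    rw [abs_sub_le_iff]
    constructor <;> [skip; skip] <;> simp only [mem_Icc] at h1 h2 <;> linarith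
  have hDNub : ∀ s ∈ Icc (0:ℝ) 1, |FN s - F s| ≤ DN := by
    intro s hs
    rw [hDN]
    exact le_csSup hDNbdd ⟨s, hs, rfl⟩
  have hDN0 : 0 ≤ DN := le_trans (abs_nonneg _) (hDNub 0 (by norm_num))
  -- sorted points
  set σ := Tuple.sort t with hσ
  set x : Fin N → ℝ := t ∘ σ with hx
  have hxmono : Monotone x := Tuple.monotone_sort t
  have hx01 : ∀ i, x i ∈ Icc (0:ℝ) 1 := fun i => ht _
  -- extended partition
  set y : ℕ → ℝ := fun j => if h : 1 ≤ j ∧ j ≤ N then x ⟨j - 1, by omega⟩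
    else if j = 0 then 0 else 1 with hy
  have hy0 : y 0 = 0 := by simp [hy]
  have hyN1 : y (N + 1) = 1 := by
    simp only [hy]
    rw [dif_neg (by omega), if_neg (by omega)]
  have hyx : ∀ j, 1 ≤ j → ∀ h2 : j ≤ N, y j = x ⟨j - 1, by omega⟩ := by
    intro j h1 h2
    simp only [hy]
    rw [dif_pos ⟨h1, h2⟩]
  have ystep : ∀ j ≤ N, y j ≤ y (j + 1) := by
    intro j hj
    rcases Nat.eq_zero_or_pos j with rfl | h1
    · rw [hy0, hyx 1 le_rfl hN]
      exact (hx01 _).1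
    rcases eq_or_lt_of_le hj with rfl | hlt
    · rw [hyN1, hyx j h1 le_rfl]
      exact (hx01 _).2
    · rw [hyx j h1 hj, hyx (j + 1) (by omega) hlt]
      exact hxmono (Fin.mk_le_mk.2 (by omega))
  have ymem : ∀ j ≤ N + 1, y j ∈ Icc (0:ℝ) 1 := by
    intro j hj
    rcases Nat.eq_zero_or_pos j with rfl | h1
    · rw [hy0]; norm_num
    rcases eq_or_lt_of_le hj with rfl | hlt
    · rw [hyN1]; norm_num
    · rw [hyx j h1 (by omega)]
      exact hx01 _
  have ychain : ∀ i j, i ≤ j → j ≤ N + 1 → y i ≤ y j := by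
    intro i j hij hjN
    induction j with
    | zero =>
      have h0 : i = 0 := Nat.le_zero.1 hij
      subst h0
      exact le_rfl
    | succ j ih =>
      rcases eq_or_lt_of_le hij with rfl | hlt
      · exact le_rfl
      · exact (ih (by omega) (by omega)).trans (ystep j (by omega))
  -- counting
  have hcard : ∀ s : ℝ, (Finset.univ.filter (fun i => t i ≤ s)).card
      = (Finset.univ.filter (fun i => x i ≤ s)).card := by
    intro s
    refine (Finset.card_bij' (fun i _ => σ i) (fun i _ => σ.symm i) ?_ ?_ ?_ ?_).symm
    · intro i hi
      simp only [Finset.mem_filter, Finset.mem_univ, true_and] at hi ⊢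
      simpa [hx] using hi
    · intro i hi
      simp only [Finset.mem_filter, Finset.mem_univ, true_and] at hi ⊢
      simpa [hx] using hi
    · intro i _; simp
    · intro i _; simp
  have hcount : ∀ j ≤ N, ∀ s ∈ Ioo (y j) (y (j + 1)), FN s = j / N := by
    intro j hj s hs
    rw [hFN s, hcard s]
    congr 1
    have hfil : (Finset.univ.filter (fun i => x i ≤ s))
        = Finset.univ.filter (fun i : Fin N => (i : ℕ) < j) := by
      ext i
      simp only [Finset.mem_filter, Finset.mem_univ, true_and]
      constructor
      · intro hle
        by_contra hcon
        push_neg at hcon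
        have hjN : j < N := lt_of_le_of_lt hcon i.isLt
        have : y (j + 1) ≤ x i := by
          rw [hyx (j + 1) (by omega) hjN]
          exact hxmono (Fin.mk_le_mk.2 (by omega))
        linarith [hs.2]
      · intro hlt
        have h1j : 1 ≤ j := by omega
        have : x i ≤ y j := by
          rw [hyx j h1j hj]
          exact hxmono (Fin.mk_le_mk.2 (by omega))
        linarith [hs.1]
    rw [hfil]
    rcases eq_or_lt_of_le hj with rfl | hlt
    · rw [Finset.filter_true_of_mem (fun i _ => i.isLt)]
      simp
    · have : (Finset.univ.filter (fun i : Fin N => (i : ℕ) < j)) = Finset.Iio ⟨j, hlt⟩ := by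
        ext i
        simp [Finset.mem_Iio, Fin.lt_def]
      rw [this, Fin.card_Iio]
  -- integrability of g
  obtain ⟨P, Q, hP, hQ, hPQ⟩ := hgBV.locallyBoundedVariationOn.exists_monotoneOn_sub_monotoneOn
  have hgintuv : ∀ u v : ℝ, u ∈ Icc (0:ℝ) 1 → v ∈ Icc (0:ℝ) 1 →
      IntervalIntegrable g volume u v := by
    intro u v hu hv
    have hsub : uIcc u v ⊆ Icc (0:ℝ) 1 := uIcc_subset_Icc hu hv
    have h1 : IntervalIntegrable P volume u v := (hP.mono hsub).intervalIntegrable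
    have h2 : IntervalIntegrable Q volume u v := (hQ.mono hsub).intervalIntegrable
    have h3 := h1.sub h2
    have : g = fun z => P z - Q z := by rw [hPQ]; rfl
    rw [this]
    exact h3
  have hgF'int : ∀ j ≤ N, IntervalIntegrable (fun s => g s * F' s) volume (y j) (y (j + 1)) := by
    intro j hj
    refine (hgintuv _ _ (ymem j (by omega)) (ymem (j + 1) (by omega))).mul_continuousOn
      (hF'cont.mono ?_)
    exact uIcc_subset_Icc (ymem j (by omega)) (ymem (j + 1) (by omega))
  -- the telescoping terms
  set T : ℕ → ℝ := fun j => (F (y (j + 1)) - j / N) * g (y (j + 1))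
      - (F (y j) - j / N) * g (y j) - ∫ s in y j..y (j + 1), g s * F' s with hT
  have hsx : ∑ i : Fin N, g (x i) = ∑ j ∈ Finset.range N, g (y (j + 1)) := by
    rw [← Fin.sum_univ_eq_sum_range (fun j => g (y (j + 1))) N]
    refine Finset.sum_congr rfl (fun i _ => ?_)
    congr 1
    rw [hyx (i + 1) (by omega) (by omega)]
    exact congrArg x (Fin.ext (by simp))
  have hTsum : ∑ j ∈ Finset.range (N + 1), T j
      = (1 / N) * (∑ i, g (t i)) - ∫ s in (0:ℝ)..1, g s * F' s := by
    have hterm : ∀ j ∈ Finset.range (N + 1), T j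
        = (((F (y (j + 1)) - ((j + 1 : ℕ) : ℝ) / N) * g (y (j + 1)))
            - ((F (y j) - (j : ℝ) / N) * g (y j)))
          + (1 / N) * g (y (j + 1))
          - ∫ s in y j..y (j + 1), g s * F' s := by
      intro j _
      simp only [hT]
      push_cast
      field_simp
      ring
    rw [Finset.sum_congr rfl hterm, Finset.sum_sub_distrib, Finset.sum_add_distrib,
      Finset.sum_range_sub (fun j => (F (y j) - j / N) * g (y j)),
      intervalIntegral.sum_integral_adjacent_intervals
        (fun k hk => hgF'int k (by omega)),
      hy0, hyN1, hF0, hF1, ← Finset.mul_sum, Finset.sum_range_succ, hyN1]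
    have hsum2 : ∑ i, g (t i) = ∑ j ∈ Finset.range N, g (y (j + 1)) := by
      rw [← hsx, hx]
      exact (Equiv.sum_comp σ (fun i => g (t i))).symm
    rw [← hsum2]
    push_cast
    field_simp
    ring
  -- bound each term
  have hyfin : ∀ j ≤ N, eVariationOn g (Icc (y j) (y (j + 1))) ≠ ⊤ := by
    intro j hj
    exact ne_top_of_le_ne_top hgBV
      (eVariationOn.mono g (Icc_subset_Icc (ymem j (by omega)).1 (ymem (j + 1) (by omega)).2))
  have hTbound : ∀ j ≤ N, |T j| ≤ DN * (eVariationOn g (Icc (y j) (y (j + 1)))).toReal := by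
    intro j hj
    have hsub : Icc (y j) (y (j + 1)) ⊆ Icc (0:ℝ) 1 :=
      Icc_subset_Icc (ymem j (by omega)).1 (ymem (j + 1) (by omega)).2
    rcases eq_or_lt_of_le (ystep j hj) with heq | hlt
    · have hT0 : T j = 0 := by
        simp only [hT, ← heq, intervalIntegral.integral_same]
        ring
      rw [hT0, abs_zero]
      positivity
    · have hDj : ∀ s ∈ Icc (y j) (y (j + 1)), |F s - j / N| ≤ DN := by
        refine le_on_Icc_of_Ioo hlt (fun s hs => ?_) (fun s hs => ?_)
        · exact ((hFcont s (hsub hs)).sub continuousAt_const).abs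
        · have hs01 : s ∈ Icc (0:ℝ) 1 := hsub ⟨hs.1.le, hs.2.le⟩
          have := hDNub s hs01
          rw [hcount j hj s hs] at this
          rwa [abs_sub_comm] at this
      exact koksma_key g F F' (y j) (y (j + 1)) (j / N) DN CF hlt.le
        (fun s hs => hFderiv s (hsub hs)) (hF'cont.mono hsub)
        (fun s hs => hCF' s (hsub hs))
        (fun u v hu hv => hgintuv u v (hsub hu) (hsub hv))
        (ne_top_of_le_ne_top hgBV (eVariationOn.mono g hsub))
        hDj
  -- sum of variations
  have hsumvar : ∑ j ∈ Finset.range (N + 1),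
      (eVariationOn g (Icc (y j) (y (j + 1)))).toReal = V := by
    rw [← ENNReal.toReal_sum (fun j hj => hyfin j (by
        have := Finset.mem_range.1 hj; omega)),
      evar_chain g y (N + 1) (fun j hj => ystep j (by omega)), hy0, hyN1]
  -- main unweighted bound
  have hmain : |(∫ s in (0:ℝ)..1, g s * F' s) - (1 / N) * ∑ i, g (t i)| ≤ V * DN := by
    have h0 : (∫ s in (0:ℝ)..1, g s * F' s) - (1 / N) * ∑ i, g (t i)
        = -(∑ j ∈ Finset.range (N + 1), T j) := by
      rw [hTsum]; ring
    rw [h0, abs_neg]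
    calc |∑ j ∈ Finset.range (N + 1), T j|
        ≤ ∑ j ∈ Finset.range (N + 1), |T j| := Finset.abs_sum_le_sum_abs _ _
      _ ≤ ∑ j ∈ Finset.range (N + 1),
            DN * (eVariationOn g (Icc (y j) (y (j + 1)))).toReal :=
          Finset.sum_le_sum (fun j hj => hTbound j (by
            have := Finset.mem_range.1 hj; omega))
      _ = DN * V := by rw [← Finset.mul_sum, hsumvar]
      _ = V * DN := mul_comm _ _
  -- weighted part
  have hwpart : |(1 / (N:ℝ)) * ∑ i, g (t i) * (w i - 1)| ≤ C * S * DN := by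
    rw [abs_mul, abs_of_nonneg (by positivity : (0:ℝ) ≤ 1 / (N:ℝ))]
    calc (1 / (N:ℝ)) * |∑ i, g (t i) * (w i - 1)|
        ≤ (1 / (N:ℝ)) * ∑ i, |g (t i) * (w i - 1)| := by
          gcongr
          exact Finset.abs_sum_le_sum_abs _ _
      _ ≤ (1 / (N:ℝ)) * ∑ _i : Fin N, S * (C * DN) := by
          gcongr with i
          rw [abs_mul]
          exact mul_le_mul (hgS _ (ht i)) (hw i) (abs_nonneg _) hS0
      _ = C * S * DN := by
          rw [Finset.sum_const, Finset.card_univ, Fintype.card_fin, nsmul_eq_mul]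
          field_simp
  -- combine
  have hsplit2 : (1 / (N:ℝ)) * ∑ i, g (t i) * w i
      = (1 / N) * ∑ i, g (t i) + (1 / N) * ∑ i, g (t i) * (w i - 1) := by
    rw [← mul_add, ← Finset.sum_add_distrib]
    congr 1
    refine Finset.sum_congr rfl (fun i _ => ?_)
    ring
  calc |(∫ s in (0:ℝ)..1, g s * F' s) - (1 / N) * ∑ i, g (t i) * w i|
      = |((∫ s in (0:ℝ)..1, g s * F' s) - (1 / N) * ∑ i, g (t i))
          - (1 / N) * ∑ i, g (t i) * (w i - 1)| := by rw [hsplit2]; congr 1; ring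
    _ ≤ |(∫ s in (0:ℝ)..1, g s * F' s) - (1 / N) * ∑ i, g (t i)|
          + |(1 / (N:ℝ)) * ∑ i, g (t i) * (w i - 1)| := abs_sub _ _
    _ ≤ V * DN + C * S * DN := add_le_add hmain hwpart
    _ = (V + C * S) * DN := by ring
end

section
/- Koksma's inequality (classical case): if g : [0,1] → ℝ has bounded variation V(g) and t_1,...,t_N ∈ [0,1], then |∫₀¹ g(t) dt − (1/N)·Σ_{i=1}^N g(t_i)| ≤ V(g)·D*_N, where D*_N is the star discrepancy of the points with respect to the uniform distribution. -/
open Set MeasureTheory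

private lemma koksma_mono_upper {N : ℕ} (hN : 0 < N) (x : Fin N → ℝ)
    (hx : ∀ i, x i ∈ Icc (0:ℝ) 1)
    (h : ℝ → ℝ) (hmono : MonotoneOn h (Icc (0:ℝ) 1))
    (D : ℝ) (hD : 0 ≤ D)
    (hB : ∀ i : Fin N, ((i : ℕ) + 1 : ℝ)/N - D ≤ x i) :
    (∫ s in (0:ℝ)..1, h s) - (1/N) * ∑ i, h (x i) ≤ D * (h 1 - h 0) := by
  have hN' : (0:ℝ) < N := by exact_mod_cast hN
  set d : ℝ := min D 1 with hd_def
  have hd0 : 0 ≤ d := le_min hD zero_le_one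
  have hd1 : d ≤ 1 := min_le_right _ _
  set c : ℝ → ℝ := fun s => max (s - d) 0 with hc_def
  have hcmem : ∀ s ∈ Icc (0:ℝ) 1, c s ∈ Icc (0:ℝ) 1 := by
    intro s hs
    exact ⟨le_max_right _ _, max_le (by linarith [hs.2]) (by norm_num)⟩
  have hcmono : Monotone c := fun a b hab => max_le_max (by linarith) le_rfl
  have hhc_mono : MonotoneOn (fun s => h (c s)) (Icc (0:ℝ) 1) := fun a ha b hb hab =>
    hmono (hcmem a ha) (hcmem b hb) (hcmono hab)
  have hint : ∀ a b : ℝ, a ∈ Icc (0:ℝ) 1 → b ∈ Icc (0:ℝ) 1 →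
      IntervalIntegrable (fun s => h (c s)) volume a b := fun a b ha hb =>
    (hhc_mono.mono (uIcc_subset_Icc ha hb)).intervalIntegrable
  have hint_h : ∀ a b : ℝ, a ∈ Icc (0:ℝ) 1 → b ∈ Icc (0:ℝ) 1 →
      IntervalIntegrable h volume a b := fun a b ha hb =>
    (hmono.mono (uIcc_subset_Icc ha hb)).intervalIntegrable
  have hgrid : ∀ k : ℕ, k ≤ N → ((k:ℝ)/N) ∈ Icc (0:ℝ) 1 := by
    intro k hk
    refine ⟨by positivity, ?_⟩
    rw [div_le_one hN']; exact_mod_cast hk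
  have h01 : (0:ℝ) ∈ Icc (0:ℝ) 1 := ⟨le_rfl, zero_le_one⟩
  have h11 : (1:ℝ) ∈ Icc (0:ℝ) 1 := ⟨zero_le_one, le_rfl⟩
  have hdmem : d ∈ Icc (0:ℝ) 1 := ⟨hd0, hd1⟩
  have h1d : (1 - d) ∈ Icc (0:ℝ) 1 := ⟨by linarith, by linarith⟩
  -- per-interval bound
  have key : ∀ i : Fin N,
      (∫ s in ((i:ℕ):ℝ)/N..((((i:ℕ)+1:ℕ)):ℝ)/N, h (c s)) ≤ (1/N) * h (x i) := by
    intro i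
    have hiN : (i : ℕ) < N := i.isLt
    have hi1 : ((i:ℕ):ℝ)/N ∈ Icc (0:ℝ) 1 := hgrid _ hiN.le
    have hi2 : (((i:ℕ)+1:ℕ):ℝ)/N ∈ Icc (0:ℝ) 1 := hgrid _ hiN
    have hle : ((i:ℕ):ℝ)/N ≤ (((i:ℕ)+1:ℕ):ℝ)/N := by
      gcongr
      · linarith
    have hmono_pt : ∀ s ∈ Icc (((i:ℕ):ℝ)/N) ((((i:ℕ)+1:ℕ):ℝ)/N), h (c s) ≤ h (x i) := by
      intro s hs
      have hsmem : s ∈ Icc (0:ℝ) 1 := ⟨le_trans hi1.1 hs.1, le_trans hs.2 hi2.2⟩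
      refine hmono (hcmem s hsmem) (hx i) ?_
      refine max_le ?_ (hx i).1
      rcases le_total D 1 with hD1 | hD1
      · have hdD : d = D := min_eq_left hD1
        have hs2 : s ≤ (((i:ℕ):ℝ)+1)/N := by
          have := hs.2; push_cast at this; linarith
        have := hB i
        linarith
      · have hdD : d = 1 := min_eq_right hD1
        have : s - d ≤ 0 := by linarith [hsmem.2]
        linarith [(hx i).1]
    calc (∫ s in ((i:ℕ):ℝ)/N..((((i:ℕ)+1:ℕ)):ℝ)/N, h (c s))
        ≤ ∫ _s in ((i:ℕ):ℝ)/N..((((i:ℕ)+1:ℕ)):ℝ)/N, h (x i) := by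
          exact intervalIntegral.integral_mono_on hle
            (hint _ _ hi1 hi2) intervalIntegrable_const hmono_pt
      _ = (1/N) * h (x i) := by
          rw [intervalIntegral.integral_const, smul_eq_mul]
          congr 1
          push_cast
          field_simp
          ring
  -- summing over the grid
  have adj : (∑ k ∈ Finset.range N, ∫ s in ((k:ℕ):ℝ)/N..(((k+1:ℕ)):ℝ)/N, h (c s))
      = ∫ s in (0:ℝ)..1, h (c s) := by
    have := intervalIntegral.sum_integral_adjacent_intervals (μ := volume)
      (a := fun k => (k:ℝ)/N) (n := N) (f := fun s => h (c s)) ?_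
    · have h0 : ((0:ℕ):ℝ)/N = 0 := by norm_num
      have h1 : ((N:ℕ):ℝ)/N = 1 := by field_simp
      rw [h0, h1] at this
      exact this
    · intro k hk
      exact hint _ _ (hgrid k hk.le) (hgrid (k+1) hk)
  have hsum : (∫ s in (0:ℝ)..1, h (c s)) ≤ (1/N) * ∑ i, h (x i) := by
    rw [← adj, Finset.mul_sum]
    rw [← Fin.sum_univ_eq_sum_range (fun k => ∫ s in ((k:ℕ):ℝ)/N..(((k+1:ℕ)):ℝ)/N, h (c s)) N]
    exact Finset.sum_le_sum fun i _ => key i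
  -- computing ∫ h(c s)
  have hsplit : (∫ s in (0:ℝ)..1, h (c s))
      = (∫ s in (0:ℝ)..d, h (c s)) + ∫ s in d..1, h (c s) :=
    (intervalIntegral.integral_add_adjacent_intervals (hint 0 d h01 hdmem)
      (hint d 1 hdmem h11)).symm
  have hpart1 : (∫ s in (0:ℝ)..d, h (c s)) = d * h 0 := by
    rw [show (∫ s in (0:ℝ)..d, h (c s)) = ∫ _s in (0:ℝ)..d, h 0 from
      intervalIntegral.integral_congr ?_]
    · rw [intervalIntegral.integral_const, smul_eq_mul, sub_zero]
    · intro s hs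
      rw [uIcc_of_le hd0] at hs
      have : s - d ≤ 0 := by linarith [hs.2]
      simp only [hc_def]
      rw [max_eq_right this]
  have hpart2 : (∫ s in d..1, h (c s)) = ∫ s in (0:ℝ)..(1-d), h s := by
    rw [show (∫ s in d..1, h (c s)) = ∫ s in d..1, h (s - d) from
      intervalIntegral.integral_congr ?_]
    · rw [intervalIntegral.integral_comp_sub_right (fun u => h u) d]
      norm_num
    · intro s hs
      rw [uIcc_of_le hd1] at hs
      have : 0 ≤ s - d := by linarith [hs.1]
      simp only [hc_def]
      rw [max_eq_left this]
  have hsplit2 : (∫ s in (0:ℝ)..1, h s)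
      = (∫ s in (0:ℝ)..(1-d), h s) + ∫ s in (1-d)..1, h s :=
    (intervalIntegral.integral_add_adjacent_intervals (hint_h 0 (1-d) h01 h1d)
      (hint_h (1-d) 1 h1d h11)).symm
  have hlast : (∫ s in (1-d)..1, h s) ≤ d * h 1 := by
    calc (∫ s in (1-d)..1, h s) ≤ ∫ _s in (1-d)..1, h 1 := by
          refine intervalIntegral.integral_mono_on (by linarith)
            (hint_h _ _ h1d h11) intervalIntegrable_const ?_
          intro s hs
          exact hmono ⟨le_trans h1d.1 hs.1, hs.2⟩ h11 hs.2
      _ = d * h 1 := by rw [intervalIntegral.integral_const, smul_eq_mul]; ring_nf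
  have hh01 : h 0 ≤ h 1 := hmono h01 h11 zero_le_one
  have hdD : d * (h 1 - h 0) ≤ D * (h 1 - h 0) :=
    mul_le_mul_of_nonneg_right (min_le_left _ _) (by linarith)
  linarith

private lemma koksma_mono_lower {N : ℕ} (hN : 0 < N) (x : Fin N → ℝ)
    (hx : ∀ i, x i ∈ Icc (0:ℝ) 1)
    (h : ℝ → ℝ) (hmono : MonotoneOn h (Icc (0:ℝ) 1))
    (D : ℝ) (hD : 0 ≤ D)
    (hA : ∀ i : Fin N, x i ≤ ((i : ℕ) : ℝ)/N + D) :
    -(D * (h 1 - h 0)) ≤ (∫ s in (0:ℝ)..1, h s) - (1/N) * ∑ i, h (x i) := by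
  have hN' : (0:ℝ) < N := by exact_mod_cast hN
  set h' : ℝ → ℝ := fun s => -h (1 - s) with hh'
  set x' : Fin N → ℝ := fun i => 1 - x i.rev with hx'def
  have hx' : ∀ i, x' i ∈ Icc (0:ℝ) 1 := fun i =>
    ⟨by simp only [hx'def]; linarith [(hx i.rev).2], by simp only [hx'def]; linarith [(hx i.rev).1]⟩
  have hmono' : MonotoneOn h' (Icc (0:ℝ) 1) := by
    intro a ha b hb hab
    simp only [hh', neg_le_neg_iff]
    exact hmono ⟨by linarith [hb.2], by linarith [hb.1]⟩
      ⟨by linarith [ha.2], by linarith [ha.1]⟩ (by linarith)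
  have hB' : ∀ i : Fin N, ((i : ℕ) + 1 : ℝ)/N - D ≤ x' i := by
    intro i
    have hrev : ((i.rev : ℕ) : ℝ) = (N : ℝ) - ((i : ℕ) + 1) := by
      rw [Fin.val_rev]
      have : (i : ℕ) + 1 ≤ N := i.isLt
      push_cast [this]
      ring
    have := hA i.rev
    rw [hrev] at this
    simp only [hx'def]
    have hexp : ((N : ℝ) - ((i : ℕ) + 1))/N = 1 - ((i : ℕ) + 1 : ℝ)/N := by
      field_simp
    rw [hexp] at this
    linarith
  have := koksma_mono_upper hN x' hx' h' hmono' D hD hB'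
  have hsum' : (∑ i, h' (x' i)) = -∑ i, h (x i) := by
    have step : ∀ i : Fin N, h' (x' i) = -h (x i.rev) := by
      intro i
      simp only [hh', hx'def]
      ring_nf
    calc (∑ i, h' (x' i)) = ∑ i, -h (x i.rev) := Finset.sum_congr rfl (fun i _ => step i)
      _ = -∑ i : Fin N, h (x i.rev) := by rw [Finset.sum_neg_distrib]
      _ = -∑ i : Fin N, h (x i) := by
          congr 1
          exact Fintype.sum_bijective Fin.rev Fin.rev_bijective _ _ (fun i => rfl)
  have hint' : (∫ s in (0:ℝ)..1, h' s) = -∫ s in (0:ℝ)..1, h s := by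
    simp only [hh']
    rw [intervalIntegral.integral_neg]
    congr 1
    rw [intervalIntegral.integral_comp_sub_left (fun u => h u) 1]
    norm_num
  have he1 : h' 1 = -h 0 := by simp [hh']
  have he0 : h' 0 = -h 1 := by simp [hh']
  have hends : h' 1 - h' 0 = h 1 - h 0 := by rw [he1, he0]; ring
  rw [hsum', hint', hends] at this
  linarith

/-- Classical Koksma inequality: the quadrature error of the equal-weight rule
is bounded by the total variation of `g` times the star discrepancy. -/
theorem koksma_inequality (N : ℕ) (hN : 0 < N)
    (t : Fin N → ℝ) (ht : ∀ i, t i ∈ Icc (0:ℝ) 1)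
    (g : ℝ → ℝ) (hgBV : BoundedVariationOn g (Icc (0:ℝ) 1))
    (FN : ℝ → ℝ)
    (hFN : ∀ s, FN s = ((Finset.univ.filter (fun i => t i ≤ s)).card : ℝ) / N)
    (DN : ℝ) (hDN : DN = sSup ((fun s => |FN s - s|) '' Icc (0:ℝ) 1)) :
    |(∫ s in (0:ℝ)..1, g s) - (1 / N) * ∑ i, g (t i)| ≤
      (eVariationOn g (Icc (0:ℝ) 1)).toReal * DN := by
  have hN' : (0:ℝ) < N := by exact_mod_cast hN
  have h01 : (0:ℝ) ∈ Icc (0:ℝ) 1 := ⟨le_rfl, zero_le_one⟩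
  have h11 : (1:ℝ) ∈ Icc (0:ℝ) 1 := ⟨zero_le_one, le_rfl⟩
  -- basic facts about FN and DN
  have hFN_mem : ∀ s, 0 ≤ FN s ∧ FN s ≤ 1 := by
    intro s
    rw [hFN s]
    constructor
    · positivity
    · rw [div_le_one hN']
      exact_mod_cast (Finset.card_filter_le _ _).trans (by simp)
  have hDbdd : BddAbove ((fun s => |FN s - s|) '' Icc (0:ℝ) 1) := by
    refine ⟨1, ?_⟩
    rintro _ ⟨s, hs, rfl⟩
    rw [abs_sub_le_iff]
    constructor <;> linarith [(hFN_mem s).1, (hFN_mem s).2, hs.1, hs.2]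
  have hDle : ∀ s ∈ Icc (0:ℝ) 1, |FN s - s| ≤ DN := fun s hs =>
    hDN ▸ le_csSup hDbdd ⟨s, hs, rfl⟩
  have hD0 : 0 ≤ DN := le_trans (abs_nonneg _) (hDle 0 h01)
  -- sorting the points
  set σ := Tuple.sort t with hσ
  set x : Fin N → ℝ := t ∘ σ with hxdef
  have hxmono : Monotone x := Tuple.monotone_sort t
  have hxmem : ∀ i, x i ∈ Icc (0:ℝ) 1 := fun i => ht _
  have hsum_eq : ∀ f : ℝ → ℝ, (∑ i, f (t i)) = ∑ i, f (x i) := fun f =>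
    (Equiv.sum_comp σ (fun i => f (t i))).symm
  have hcard : ∀ s : ℝ, (Finset.univ.filter fun i => x i ≤ s).card
      = (Finset.univ.filter fun i => t i ≤ s).card := by
    intro s
    apply Finset.card_bij' (fun a _ => σ a) (fun b _ => σ.symm b)
    · intro a ha
      simp only [Finset.mem_filter, Finset.mem_univ, true_and] at ha ⊢
      exact ha
    · intro b hb
      simp only [Finset.mem_filter, Finset.mem_univ, true_and] at hb ⊢
      simpa [hxdef] using hb
    · intro a _; simp
    · intro b _; simp
  have hFNx : ∀ s : ℝ, FN s = ((Finset.univ.filter fun i => x i ≤ s).card : ℝ) / N := by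
    intro s; rw [hFN s, hcard s]
  -- sorted point bounds
  have hB : ∀ i : Fin N, ((i : ℕ) + 1 : ℝ)/N - DN ≤ x i := by
    intro i
    have hsub : Finset.Iic i ⊆ Finset.univ.filter fun j => x j ≤ x i := by
      intro j hj
      simp only [Finset.mem_Iic] at hj
      simp only [Finset.mem_filter, Finset.mem_univ, true_and]
      exact hxmono hj
    have hcard_ge : (i : ℕ) + 1 ≤ (Finset.univ.filter fun j => x j ≤ x i).card := by
      have := Finset.card_le_card hsub
      rwa [Fin.card_Iic] at this
    have hFNi : ((i : ℕ) + 1 : ℝ)/N ≤ FN (x i) := by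
      rw [hFNx]
      exact (div_le_div_iff_of_pos_right hN').mpr (by exact_mod_cast hcard_ge)
    have habs := hDle (x i) (hxmem i)
    have : FN (x i) - x i ≤ DN := le_trans (le_abs_self _) habs
    linarith
  have hA : ∀ i : Fin N, x i ≤ ((i : ℕ) : ℝ)/N + DN := by
    intro i
    have hiN0 : (0:ℝ) ≤ ((i : ℕ) : ℝ)/N := by positivity
    refine le_of_forall_pos_le_add ?_
    intro ε hε
    rcases le_or_gt (x i) ε with hle | hlt
    · linarith
    · set s := x i - ε with hs_def
      have hs : s ∈ Icc (0:ℝ) 1 := ⟨by linarith, by linarith [(hxmem i).2]⟩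
      have hcard_le : (Finset.univ.filter fun j => x j ≤ s).card ≤ (i : ℕ) := by
        have hsub : (Finset.univ.filter fun j => x j ≤ s) ⊆ Finset.Iio i := by
          intro j hj
          simp only [Finset.mem_filter, Finset.mem_univ, true_and] at hj
          rw [Finset.mem_Iio]
          by_contra hji
          push_neg at hji
          have := hxmono hji
          simp only [hs_def] at hj
          linarith
        have := Finset.card_le_card hsub
        rwa [Fin.card_Iio] at this
      have hFNs : FN s ≤ ((i : ℕ) : ℝ)/N := by
        rw [hFNx]
        exact (div_le_div_iff_of_pos_right hN').mpr (by exact_mod_cast hcard_le)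
      have habs := hDle s hs
      have h' : s - FN s ≤ |FN s - s| := by
        rw [abs_sub_comm]; exact le_abs_self _
      have : s - FN s ≤ DN := le_trans h' habs
      linarith
  -- decomposition of g into monotone parts
  have hlbv : LocallyBoundedVariationOn g (Icc (0:ℝ) 1) := hgBV.locallyBoundedVariationOn
  set v : ℝ → ℝ := variationOnFromTo g (Icc (0:ℝ) 1) 0 with hvdef
  have hvar : ∀ a ∈ Icc (0:ℝ) 1, ∀ b ∈ Icc (0:ℝ) 1, a ≤ b → |g b - g a| ≤ v b - v a := by
    intro a ha b hb hab
    have hadd := variationOnFromTo.add hlbv h01 ha hb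
    have hstep : |g b - g a| ≤ variationOnFromTo g (Icc (0:ℝ) 1) a b := by
      rw [variationOnFromTo.eq_of_le g _ hab]
      have h1 : edist (g a) (g b) ≤ eVariationOn g (Icc (0:ℝ) 1 ∩ Icc a b) :=
        eVariationOn.edist_le g ⟨ha, le_rfl, hab⟩ ⟨hb, hab, le_rfl⟩
      have h2 : |g b - g a| = (edist (g a) (g b)).toReal := by
        rw [edist_dist, ENNReal.toReal_ofReal dist_nonneg, Real.dist_eq, abs_sub_comm]
      rw [h2]
      exact ENNReal.toReal_mono (hlbv a b ha hb) h1
    linarith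
  set p : ℝ → ℝ := fun y => (v y + g y)/2 with hpdef
  set q : ℝ → ℝ := fun y => (v y - g y)/2 with hqdef
  have hpmono : MonotoneOn p (Icc (0:ℝ) 1) := by
    intro a ha b hb hab
    have h1 := hvar a ha b hb hab
    have h2 := neg_abs_le (g b - g a)
    simp only [hpdef]
    linarith
  have hqmono : MonotoneOn q (Icc (0:ℝ) 1) := by
    intro a ha b hb hab
    have h1 := hvar a ha b hb hab
    have h2 := le_abs_self (g b - g a)
    simp only [hqdef]
    linarith
  -- apply the monotone Koksma bounds
  have hEp_ub := koksma_mono_upper hN x hxmem p hpmono DN hD0 hB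
  have hEp_lb := koksma_mono_lower hN x hxmem p hpmono DN hD0 hA
  have hEq_ub := koksma_mono_upper hN x hxmem q hqmono DN hD0 hB
  have hEq_lb := koksma_mono_lower hN x hxmem q hqmono DN hD0 hA
  -- integrals and sums split
  have huIcc : uIcc (0:ℝ) 1 = Icc (0:ℝ) 1 := uIcc_of_le zero_le_one
  have hip : IntervalIntegrable p volume 0 1 :=
    MonotoneOn.intervalIntegrable (huIcc ▸ hpmono)
  have hiq : IntervalIntegrable q volume 0 1 :=
    MonotoneOn.intervalIntegrable (huIcc ▸ hqmono)
  have hgint : (∫ s in (0:ℝ)..1, g s) = (∫ s in (0:ℝ)..1, p s) - ∫ s in (0:ℝ)..1, q s := by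
    rw [← intervalIntegral.integral_sub hip hiq]
    apply intervalIntegral.integral_congr
    intro s _
    simp only [hpdef, hqdef]
    ring
  have hgsum : (∑ i, g (x i)) = (∑ i, p (x i)) - ∑ i, q (x i) := by
    rw [← Finset.sum_sub_distrib]
    apply Finset.sum_congr rfl
    intro i _
    simp only [hpdef, hqdef]
    ring
  -- the total variation
  have hv0 : v 0 = 0 := variationOnFromTo.self g _ 0
  have hv1 : v 1 = (eVariationOn g (Icc (0:ℝ) 1)).toReal := by
    rw [hvdef, variationOnFromTo.eq_of_le g _ zero_le_one]
    congr 1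
    rw [inter_eq_self_of_subset_left]
    exact subset_rfl
  have hends : (p 1 - p 0) + (q 1 - q 0) = (eVariationOn g (Icc (0:ℝ) 1)).toReal := by
    simp only [hpdef, hqdef]
    rw [← hv1]
    have := hv0
    linarith
  -- conclude
  rw [hsum_eq g, hgint, hgsum]
  rw [abs_le]
  have hexpand : (∫ s in (0:ℝ)..1, p s) - (∫ s in (0:ℝ)..1, q s)
      - 1 / ↑N * ((∑ i, p (x i)) - ∑ i, q (x i))
      = ((∫ s in (0:ℝ)..1, p s) - 1/↑N * ∑ i, p (x i))
        - ((∫ s in (0:ℝ)..1, q s) - 1/↑N * ∑ i, q (x i)) := by ring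
  rw [hexpand]
  constructor
  · nlinarith [hEp_lb, hEq_ub, hends, hD0]
  · nlinarith [hEp_ub, hEq_lb, hends, hD0]
end

section
/- Sobolev interpolation inequality: there exist constants c_j depending only on m (and j ≤ m) such that for every g in the Sobolev space W^{m,2}[0,1] and every θ ∈ (0,1], θ^{2j} · ∫₀¹ |g^{(j)}(s)|² ds ≤ c_j · ( ∫₀¹ |g(s)|² ds + θ^{2m} · ∫₀¹ |g^{(m)}(s)|² ds ). -/
open Set MeasureTheory intervalIntegral

private lemma contOn_intInt {f : ℝ → ℝ} {a b x y : ℝ} (h : ContinuousOn f (Icc a b))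
    (hax : a ≤ x) (hxy : x ≤ y) (hyb : y ≤ b) : IntervalIntegrable f volume x y :=
  (h.mono (by rw [uIcc_of_le hxy]; exact Icc_subset_Icc hax hyb)).intervalIntegrable

/-- Cauchy–Schwarz: `(∫ |f|)^2 ≤ (y-x) * ∫ f^2` on `[x,y]`. -/
private lemma sq_int_abs_le {f : ℝ → ℝ} {a b x y : ℝ} (hc : ContinuousOn f (Icc a b))
    (hax : a ≤ x) (hxy : x ≤ y) (hyb : y ≤ b) :
    (∫ t in x..y, |f t|) ^ 2 ≤ (y - x) * ∫ t in x..y, (f t) ^ 2 := by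
  set S := ∫ t in x..y, (f t) ^ 2 with hSdef
  set X := ∫ t in x..y, |f t| with hXdef
  have hS : 0 ≤ S := integral_nonneg hxy (fun u _ => sq_nonneg _)
  have hX : 0 ≤ X := integral_nonneg hxy (fun u _ => abs_nonneg _)
  have hintf2 : IntervalIntegrable (fun t => (f t) ^ 2) volume x y :=
    contOn_intInt (f := fun t => (f t)^2) (by fun_prop) hax hxy hyb
  have hintabs : IntervalIntegrable (fun t => |f t|) volume x y :=
    contOn_intInt (f := fun t => |f t|) (hc.abs) hax hxy hyb
  have key : ∀ r : ℝ, 0 < r → 2 * r * X ≤ S + r ^ 2 * (y - x) := by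
    intro r hr
    have hpt : ∀ t ∈ Icc x y, 2 * r * |f t| ≤ (f t) ^ 2 + r ^ 2 := by
      intro t _
      nlinarith [sq_nonneg (|f t| - r), sq_abs (f t)]
    have := integral_mono_on hxy (hintabs.const_mul (2*r))
      (hintf2.add intervalIntegrable_const) (fun t ht => hpt t ht)
    simpa [intervalIntegral.integral_const_mul, integral_add hintf2 intervalIntegrable_const,
      intervalIntegral.integral_const, smul_eq_mul, mul_comm] using this
  rcases eq_or_lt_of_le hxy with h | h
  · simp [← h, hXdef]
  · have hL : 0 < y - x := sub_pos.mpr h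
    rcases eq_or_lt_of_le hX with h0 | h0
    · nlinarith
    · have := key (X / (y - x)) (div_pos h0 hL)
      have e : X / (y - x) * (y - x) = X := div_mul_cancel₀ _ (ne_of_gt hL)
      nlinarith [this, e, sq_nonneg (X / (y-x))]

/-- Averaging bound: if `F' = F1` (in FTC form) then for `p` in a window `[u,v] ⊆ [a,b]`,
`(v-u)|F p| ≤ ∫_u^v |F| + (v-u) ∫_u^v |F1|`. -/
private lemma endpoint_bound {F F1 : ℝ → ℝ} {a b u v p : ℝ}
    (hcF : ContinuousOn F (Icc a b)) (hcF1 : ContinuousOn F1 (Icc a b))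
    (ftc : ∀ x y, a ≤ x → x ≤ y → y ≤ b → (∫ t in x..y, F1 t) = F y - F x)
    (hau : a ≤ u) (huv : u ≤ v) (hvb : v ≤ b) (hp : p ∈ Icc u v) :
    (v - u) * |F p| ≤ |∫ t in u..v, F t| + (v - u) * ∫ t in u..v, |F1 t| := by
  have hap : a ≤ p := hau.trans hp.1
  have hpb : p ≤ b := hp.2.trans hvb
  set K := ∫ t in u..v, |F1 t| with hKdef
  have hintF1abs : IntervalIntegrable (fun t => |F1 t|) volume u v :=
    contOn_intInt hcF1.abs hau huv hvb
  have hptd : ∀ t ∈ Icc u v, |F p - F t| ≤ K := by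
    intro t ht
    have hat : a ≤ t := hau.trans ht.1
    have htb : t ≤ b := ht.2.trans hvb
    rcases le_total t p with h | h
    · rw [← ftc t p hat h hpb]
      calc |∫ s in t..p, F1 s| ≤ ∫ s in t..p, |F1 s| := abs_integral_le_integral_abs h
        _ ≤ K := integral_mono_interval ht.1 h hp.2
            (Filter.Eventually.of_forall (fun s => abs_nonneg _)) hintF1abs
    · rw [show F p - F t = -(F t - F p) by ring, abs_neg, ← ftc p t hap h htb]
      calc |∫ s in p..t, F1 s| ≤ ∫ s in p..t, |F1 s| := abs_integral_le_integral_abs h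
        _ ≤ K := integral_mono_interval hp.1 h ht.2
            (Filter.Eventually.of_forall (fun s => abs_nonneg _)) hintF1abs
  have hintF : IntervalIntegrable F volume u v := contOn_intInt hcF hau huv hvb
  have hintd : IntervalIntegrable (fun t => F p - F t) volume u v :=
    contOn_intInt (f := fun t => F p - F t) (continuousOn_const.sub hcF) hau huv hvb
  have e1 : (∫ t in u..v, (F p - F t)) = (v - u) * F p - ∫ t in u..v, F t := by
    rw [integral_sub intervalIntegrable_const hintF]
    simp [intervalIntegral.integral_const, smul_eq_mul]
  have e2 : |∫ t in u..v, (F p - F t)| ≤ (v - u) * K := by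
    calc |∫ t in u..v, (F p - F t)| ≤ ∫ t in u..v, |F p - F t| := abs_integral_le_integral_abs huv
      _ ≤ ∫ _ in u..v, K := integral_mono_on huv (hintd.abs) intervalIntegrable_const hptd
      _ = (v - u) * K := by simp [intervalIntegral.integral_const, smul_eq_mul]
  have e4 : (v - u) * F p = (∫ t in u..v, F t) + ∫ t in u..v, (F p - F t) := by linarith [e1]
  calc (v - u) * |F p| = |(v - u) * F p| := by
        rw [abs_mul, abs_of_nonneg (sub_nonneg.mpr huv)]
    _ ≤ |∫ t in u..v, F t| + |∫ t in u..v, (F p - F t)| := by rw [e4]; exact abs_add_le _ _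
    _ ≤ |∫ t in u..v, F t| + (v - u) * K := add_le_add le_rfl e2

private lemma three_sq (x y z : ℝ) : (x + y + z)^2 ≤ 3*x^2 + 3*y^2 + 3*z^2 := by
  nlinarith [sq_nonneg (x - y), sq_nonneg (x - z), sq_nonneg (y - z)]

/-- Local interpolation inequality on `[a,b]`. -/
private lemma local_interp {F F1 F2 : ℝ → ℝ} {a b : ℝ} (hab : a < b)
    (hcF : ContinuousOn F (Icc a b)) (hcF1 : ContinuousOn F1 (Icc a b))
    (hcF2 : ContinuousOn F2 (Icc a b))
    (ftc1 : ∀ x y, a ≤ x → x ≤ y → y ≤ b → (∫ t in x..y, F1 t) = F y - F x)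
    (ftc2 : ∀ x y, a ≤ x → x ≤ y → y ≤ b → (∫ t in x..y, F2 t) = F1 y - F1 x) :
    (b - a) ^ 2 * ∫ s in a..b, (F1 s) ^ 2 ≤
      576 * (∫ s in a..b, (F s) ^ 2) + 6 * (b - a) ^ 4 * ∫ s in a..b, (F2 s) ^ 2 := by
  set θ := b - a with hθdef
  have hθ : 0 < θ := sub_pos.mpr hab
  set w := θ / 24 with hwdef
  have hw : 0 < w := by positivity
  have hwθ : a + w ≤ b := by simp only [hwdef, hθdef]; linarith
  have hwa : a ≤ b - w := by simp only [hwdef, hθdef]; linarith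
  set A2 := ∫ s in a..b, (F s) ^ 2 with hA2def
  set B2 := ∫ s in a..b, (F1 s) ^ 2 with hB2def
  set C2 := ∫ s in a..b, (F2 s) ^ 2 with hC2def
  have hA2 : 0 ≤ A2 := integral_nonneg hab.le (fun u _ => sq_nonneg _)
  have hB2 : 0 ≤ B2 := integral_nonneg hab.le (fun u _ => sq_nonneg _)
  have hC2 : 0 ≤ C2 := integral_nonneg hab.le (fun u _ => sq_nonneg _)
  set qa := |F a| with hqadef
  set qb := |F b| with hqbdef
  set D := ∫ t in a..b, |F2 t| with hDdef
  have hD : 0 ≤ D := integral_nonneg hab.le (fun u _ => abs_nonneg _)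
  set Ia := ∫ t in a..(a+w), |F t| with hIadef
  set Ia1 := ∫ t in a..(a+w), |F1 t| with hIa1def
  set Ib := ∫ t in (b-w)..b, |F t| with hIbdef
  set Ib1 := ∫ t in (b-w)..b, |F1 t| with hIb1def
  have haw : a ≤ a + w := by linarith
  have hbw : b - w ≤ b := by linarith
  -- endpoint bounds
  have Ea : w * qa ≤ Ia + w * Ia1 := by
    have := endpoint_bound hcF hcF1 ftc1 le_rfl haw hwθ (left_mem_Icc.mpr haw)
    have habs : |∫ t in a..(a+w), F t| ≤ Ia :=
      abs_integral_le_integral_abs haw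
    simp only [add_sub_cancel_left] at this
    linarith
  have Eb : w * qb ≤ Ib + w * Ib1 := by
    have := endpoint_bound hcF hcF1 ftc1 hwa hbw le_rfl (right_mem_Icc.mpr hbw)
    have habs : |∫ t in (b-w)..b, F t| ≤ Ib :=
      abs_integral_le_integral_abs hbw
    simp only [sub_sub_cancel] at this
    linarith
  -- Cauchy–Schwarz bounds
  have intF2sq : IntervalIntegrable (fun s => (F s)^2) volume a b :=
    contOn_intInt (by fun_prop) le_rfl hab.le le_rfl
  have intF1sq : IntervalIntegrable (fun s => (F1 s)^2) volume a b :=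
    contOn_intInt (by fun_prop) le_rfl hab.le le_rfl
  have intF2sq' : IntervalIntegrable (fun s => (F2 s)^2) volume a b :=
    contOn_intInt (by fun_prop) le_rfl hab.le le_rfl
  have monoF : ∀ x y : ℝ, a ≤ x → x ≤ y → y ≤ b →
      (∫ s in x..y, (F s)^2) ≤ A2 := fun x y h1 h2 h3 =>
    integral_mono_interval h1 h2 h3 (Filter.Eventually.of_forall (fun s => sq_nonneg _)) intF2sq
  have monoF1 : ∀ x y : ℝ, a ≤ x → x ≤ y → y ≤ b →
      (∫ s in x..y, (F1 s)^2) ≤ B2 := fun x y h1 h2 h3 =>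
    integral_mono_interval h1 h2 h3 (Filter.Eventually.of_forall (fun s => sq_nonneg _)) intF1sq
  have CSIa : Ia ^ 2 ≤ w * A2 := by
    calc Ia ^ 2 ≤ (a + w - a) * ∫ t in a..(a+w), (F t)^2 := sq_int_abs_le hcF le_rfl haw hwθ
      _ ≤ w * A2 := by
          rw [add_sub_cancel_left]
          exact mul_le_mul_of_nonneg_left (monoF a (a+w) le_rfl haw hwθ) hw.le
  have CSIa1 : Ia1 ^ 2 ≤ w * B2 := by
    calc Ia1 ^ 2 ≤ (a + w - a) * ∫ t in a..(a+w), (F1 t)^2 := sq_int_abs_le hcF1 le_rfl haw hwθ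
      _ ≤ w * B2 := by
          rw [add_sub_cancel_left]
          exact mul_le_mul_of_nonneg_left (monoF1 a (a+w) le_rfl haw hwθ) hw.le
  have CSIb : Ib ^ 2 ≤ w * A2 := by
    calc Ib ^ 2 ≤ (b - (b - w)) * ∫ t in (b-w)..b, (F t)^2 := sq_int_abs_le hcF hwa hbw le_rfl
      _ ≤ w * A2 := by
          rw [sub_sub_cancel]
          exact mul_le_mul_of_nonneg_left (monoF (b-w) b hwa hbw le_rfl) hw.le
  have CSIb1 : Ib1 ^ 2 ≤ w * B2 := by
    calc Ib1 ^ 2 ≤ (b - (b - w)) * ∫ t in (b-w)..b, (F1 t)^2 := sq_int_abs_le hcF1 hwa hbw le_rfl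
      _ ≤ w * B2 := by
          rw [sub_sub_cancel]
          exact mul_le_mul_of_nonneg_left (monoF1 (b-w) b hwa hbw le_rfl) hw.le
  have CSD : D ^ 2 ≤ θ * C2 := by
    have := sq_int_abs_le hcF2 le_rfl hab.le le_rfl
    rwa [← hθdef] at this
  -- pointwise bound on F1
  set Q := qa + qb + θ * D with hQdef
  have hIa0 : 0 ≤ Ia := integral_nonneg haw (fun u _ => abs_nonneg _)
  have hIa10 : 0 ≤ Ia1 := integral_nonneg haw (fun u _ => abs_nonneg _)
  have hIb0 : 0 ≤ Ib := integral_nonneg hbw (fun u _ => abs_nonneg _)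
  have hIb10 : 0 ≤ Ib1 := integral_nonneg hbw (fun u _ => abs_nonneg _)
  have hQ : 0 ≤ Q := by positivity
  have hpt : ∀ s ∈ Icc a b, θ * |F1 s| ≤ Q := by
    intro s hs
    have := endpoint_bound hcF1 hcF2 ftc2 le_rfl hab.le le_rfl hs
    rw [ftc1 a b le_rfl hab.le le_rfl] at this
    have habs : |F b - F a| ≤ qa + qb := (abs_sub _ _).trans (by rw [add_comm])
    rw [← hθdef] at this
    simp only [hQdef]
    linarith [this, habs]
  have hpt2 : ∀ s ∈ Icc a b, θ^2 * (F1 s)^2 ≤ Q^2 := by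
    intro s hs
    have h1 := hpt s hs
    calc θ^2 * (F1 s)^2 = (θ*|F1 s|) * (θ*|F1 s|) := by rw [← sq_abs (F1 s)]; ring
      _ ≤ Q * Q := mul_self_le_mul_self (by positivity) h1
      _ = Q^2 := (sq Q).symm
  have hB : θ^2 * B2 ≤ θ * Q^2 := by
    have := integral_mono_on hab.le (intF1sq.const_mul (θ^2))
      intervalIntegrable_const hpt2
    rw [intervalIntegral.integral_const_mul, intervalIntegral.integral_const, smul_eq_mul] at this
    rw [← hθdef] at this
    linarith
  have hqa0 : 0 ≤ qa := abs_nonneg _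
  have hqb0 : 0 ≤ qb := abs_nonneg _
  clear_value θ w A2 B2 C2 qa qb D Ia Ia1 Ib Ib1 Q
  -- squared endpoint bounds
  have Ea2 : w^2 * qa^2 ≤ 2*w*A2 + 2*w^3*B2 := by
    have e : (w*qa)*(w*qa) ≤ (Ia + w*Ia1)*(Ia + w*Ia1) :=
      mul_le_mul Ea Ea (mul_nonneg hw.le hqa0) (add_nonneg hIa0 (mul_nonneg hw.le hIa10))
    have e2 : w^2 * Ia1^2 ≤ w^2 * (w*B2) := mul_le_mul_of_nonneg_left CSIa1 (by positivity)
    linarith only [e, e2, sq_nonneg (Ia - w*Ia1), CSIa]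
  have Eb2 : w^2 * qb^2 ≤ 2*w*A2 + 2*w^3*B2 := by
    have e : (w*qb)*(w*qb) ≤ (Ib + w*Ib1)*(Ib + w*Ib1) :=
      mul_le_mul Eb Eb (mul_nonneg hw.le hqb0) (add_nonneg hIb0 (mul_nonneg hw.le hIb10))
    have e2 : w^2 * Ib1^2 ≤ w^2 * (w*B2) := mul_le_mul_of_nonneg_left CSIb1 (by positivity)
    linarith only [e, e2, sq_nonneg (Ib - w*Ib1), CSIb]
  -- final assembly
  have hQsq : Q^2 ≤ 3*qa^2 + 3*qb^2 + 3*θ^2*D^2 := by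
    rw [hQdef]
    linarith only [three_sq qa qb (θ*D)]
  have h1 : θ * (θ^2 * B2) ≤ θ * (θ * Q^2) := mul_le_mul_of_nonneg_left hB hθ.le
  have h2 : θ^2 * Q^2 ≤ θ^2 * (3*qa^2 + 3*qb^2 + 3*θ^2*D^2) :=
    mul_le_mul_of_nonneg_left hQsq (by positivity)
  have h3 : θ^4 * D^2 ≤ θ^4 * (θ * C2) := mul_le_mul_of_nonneg_left CSD (by positivity)
  rw [hwdef] at Ea2 Eb2
  have Ea2' : θ^2 * qa^2 ≤ 48*θ*A2 + θ^3*B2/12 := by linarith only [Ea2]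
  have Eb2' : θ^2 * qb^2 ≤ 48*θ*A2 + θ^3*B2/12 := by linarith only [Eb2]
  have key : θ * (θ^2 * B2) ≤ θ * (576 * A2 + 6 * θ^4 * C2) := by
    linarith only [h1, h2, h3, Ea2', Eb2']
  have := le_of_mul_le_mul_left key hθ
  linarith

/-- Global interpolation on `[0,1]` via a covering argument. -/
private lemma core_interp {F F1 F2 : ℝ → ℝ}
    (hcF : ContinuousOn F (Icc (0:ℝ) 1)) (hcF1 : ContinuousOn F1 (Icc (0:ℝ) 1))
    (hcF2 : ContinuousOn F2 (Icc (0:ℝ) 1))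
    (ftc1 : ∀ x y, (0:ℝ) ≤ x → x ≤ y → y ≤ 1 → (∫ t in x..y, F1 t) = F y - F x)
    (ftc2 : ∀ x y, (0:ℝ) ≤ x → x ≤ y → y ≤ 1 → (∫ t in x..y, F2 t) = F1 y - F1 x)
    {θ : ℝ} (hθ0 : 0 < θ) (hθ1 : θ ≤ 1) :
    θ^2 * ∫ s in (0:ℝ)..1, (F1 s)^2 ≤
      1152 * (∫ s in (0:ℝ)..1, (F s)^2) + 12 * θ^4 * ∫ s in (0:ℝ)..1, (F2 s)^2 := by
  have int0 : IntervalIntegrable (fun s => (F s)^2) volume 0 1 :=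
    contOn_intInt (by fun_prop) le_rfl zero_le_one le_rfl
  have int1 : IntervalIntegrable (fun s => (F1 s)^2) volume 0 1 :=
    contOn_intInt (by fun_prop) le_rfl zero_le_one le_rfl
  have int2 : IntervalIntegrable (fun s => (F2 s)^2) volume 0 1 :=
    contOn_intInt (by fun_prop) le_rfl zero_le_one le_rfl
  have mono0 : ∀ x y : ℝ, 0 ≤ x → x ≤ y → y ≤ 1 →
      (∫ s in x..y, (F s)^2) ≤ ∫ s in (0:ℝ)..1, (F s)^2 := fun x y h1 h2 h3 =>
    integral_mono_interval h1 h2 h3 (Filter.Eventually.of_forall (fun s => sq_nonneg _)) int0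
  have mono1 : ∀ x y : ℝ, 0 ≤ x → x ≤ y → y ≤ 1 →
      (∫ s in x..y, (F1 s)^2) ≤ ∫ s in (0:ℝ)..1, (F1 s)^2 := fun x y h1 h2 h3 =>
    integral_mono_interval h1 h2 h3 (Filter.Eventually.of_forall (fun s => sq_nonneg _)) int1
  have mono2 : ∀ x y : ℝ, 0 ≤ x → x ≤ y → y ≤ 1 →
      (∫ s in x..y, (F2 s)^2) ≤ ∫ s in (0:ℝ)..1, (F2 s)^2 := fun x y h1 h2 h3 =>
    integral_mono_interval h1 h2 h3 (Filter.Eventually.of_forall (fun s => sq_nonneg _)) int2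
  -- local inequality on any [a, a+θ] ⊆ [0,1]
  have loc : ∀ a : ℝ, 0 ≤ a → a + θ ≤ 1 →
      θ^2 * ∫ s in a..(a+θ), (F1 s)^2 ≤
        576 * (∫ s in a..(a+θ), (F s)^2) + 6*θ^4 * ∫ s in a..(a+θ), (F2 s)^2 := by
    intro a ha hab
    have h1 : a < a + θ := by linarith
    have hsub : Icc a (a+θ) ⊆ Icc (0:ℝ) 1 := Icc_subset_Icc ha hab
    have := local_interp h1 (hcF.mono hsub) (hcF1.mono hsub) (hcF2.mono hsub)
      (fun x y hx hxy hy => ftc1 x y (ha.trans hx) hxy (hy.trans hab))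
      (fun x y hx hxy hy => ftc2 x y (ha.trans hx) hxy (hy.trans hab))
    simp only [add_sub_cancel_left] at this
    linarith
  set n := ⌈1/θ⌉₊ with hndef
  have hn0 : 0 < n := Nat.ceil_pos.mpr (by positivity)
  have hnθ : 1 ≤ (n:ℝ) * θ := by
    have h := Nat.le_ceil (1/θ)
    rw [← hndef] at h
    calc (1:ℝ) = (1/θ) * θ := by field_simp
      _ ≤ (n:ℝ) * θ := mul_le_mul_of_nonneg_right h hθ0.le
  set e := n - 1 with hedef
  have hne : n = e + 1 := (Nat.succ_pred_eq_of_pos hn0).symm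
  have hecast : (e:ℝ) = (n:ℝ) - 1 := by rw [hne]; push_cast; ring
  have heθ : (e:ℝ) * θ ≤ 1 := by
    have hceil : (n:ℝ) < 1/θ + 1 := by
      rw [hndef]; exact Nat.ceil_lt_add_one (by positivity)
    have he : (e:ℝ) ≤ 1/θ := by rw [hecast]; linarith
    calc (e:ℝ) * θ ≤ (1/θ) * θ := mul_le_mul_of_nonneg_right he hθ0.le
      _ = 1 := by field_simp
  have heθ0 : 0 ≤ (e:ℝ) * θ := by positivity
  have h1e : 1 - θ ≤ (e:ℝ) * θ := by
    have : (n:ℝ)*θ = (e:ℝ)*θ + θ := by rw [hecast]; ring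
    linarith
  have hek : ∀ k : ℕ, (k:ℝ) ≤ (e:ℝ) → (k:ℝ) * θ ≤ 1 := fun k hk =>
    (mul_le_mul_of_nonneg_right hk hθ0.le).trans heθ
  -- summing over the partition
  have S : ∀ (f : ℝ → ℝ), ContinuousOn f (Icc (0:ℝ) 1) →
      ∑ k ∈ Finset.range e, ∫ s in ((k:ℕ):ℝ)*θ..((k+1:ℕ):ℝ)*θ, (f s)^2
        = ∫ s in (0:ℝ)..((e:ℝ)*θ), (f s)^2 := by
    intro f hf
    have h := intervalIntegral.sum_integral_adjacent_intervals (μ := volume)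
      (f := fun s => (f s)^2) (a := fun k : ℕ => (k:ℝ)*θ) (n := e) ?_
    · simpa using h
    · intro k hk
      refine contOn_intInt (f := fun s => (f s)^2) (by fun_prop) (by positivity) ?_ ?_
      · push_cast
        nlinarith [hθ0.le]
      · push_cast
        have : ((k:ℝ)+1) ≤ (e:ℝ) := by exact_mod_cast Nat.succ_le_of_lt hk
        have := hek (k+1) (by push_cast; linarith)
        push_cast at this
        linarith
  have SF := S F hcF
  have SF1 := S F1 hcF1
  have SF2 := S F2 hcF2
  have hstep : θ^2 * ∫ s in (0:ℝ)..((e:ℝ)*θ), (F1 s)^2 ≤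
      576 * (∫ s in (0:ℝ)..1, (F s)^2) + 6*θ^4 * ∫ s in (0:ℝ)..1, (F2 s)^2 := by
    have step1 : ∑ k ∈ Finset.range e, θ^2 * ∫ s in ((k:ℕ):ℝ)*θ..((k+1:ℕ):ℝ)*θ, (F1 s)^2 ≤
        ∑ k ∈ Finset.range e, (576 * (∫ s in ((k:ℕ):ℝ)*θ..((k+1:ℕ):ℝ)*θ, (F s)^2)
          + 6*θ^4 * ∫ s in ((k:ℕ):ℝ)*θ..((k+1:ℕ):ℝ)*θ, (F2 s)^2) := by
      refine Finset.sum_le_sum (fun k hk => ?_)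
      have hk' : (k:ℝ) + 1 ≤ (e:ℝ) := by
        exact_mod_cast Nat.succ_le_of_lt (Finset.mem_range.mp hk)
      have hend : ((k:ℝ))*θ + θ ≤ 1 := by
        have := hek (k+1) (by push_cast; linarith)
        push_cast at this; linarith
      have := loc ((k:ℝ)*θ) (by positivity) hend
      have hc2 : ((k+1:ℕ):ℝ)*θ = (k:ℝ)*θ + θ := by push_cast; ring
      rw [hc2]
      exact this
    rw [← SF1, Finset.mul_sum]
    refine step1.trans ?_
    rw [Finset.sum_add_distrib, ← Finset.mul_sum, ← Finset.mul_sum, SF, SF2]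
    have m0 := mono0 0 ((e:ℝ)*θ) le_rfl heθ0 heθ
    have m2 := mono2 0 ((e:ℝ)*θ) le_rfl heθ0 heθ
    have ht4 : (0:ℝ) ≤ 6*θ^4 := by positivity
    nlinarith [mul_le_mul_of_nonneg_left m2 ht4]
  have hJ : θ^2 * ∫ s in (1-θ)..1, (F1 s)^2 ≤
      576 * (∫ s in (0:ℝ)..1, (F s)^2) + 6*θ^4 * ∫ s in (0:ℝ)..1, (F2 s)^2 := by
    have h := loc (1-θ) (by linarith) (by linarith)
    rw [show (1-θ)+θ = (1:ℝ) from by ring] at h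
    refine h.trans ?_
    have m0 := mono0 (1-θ) 1 (by linarith) (by linarith) le_rfl
    have m2 := mono2 (1-θ) 1 (by linarith) (by linarith) le_rfl
    have ht4 : (0:ℝ) ≤ 6*θ^4 := by positivity
    nlinarith [mul_le_mul_of_nonneg_left m2 ht4]
  have hsplit : ∫ s in (0:ℝ)..1, (F1 s)^2 ≤
      (∫ s in (0:ℝ)..((e:ℝ)*θ), (F1 s)^2) + ∫ s in (1-θ)..1, (F1 s)^2 := by
    have ia : IntervalIntegrable (fun s => (F1 s)^2) volume 0 ((e:ℝ)*θ) :=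
      contOn_intInt (by fun_prop) le_rfl heθ0 heθ
    have ib : IntervalIntegrable (fun s => (F1 s)^2) volume ((e:ℝ)*θ) 1 :=
      contOn_intInt (by fun_prop) heθ0 heθ le_rfl
    have ic : IntervalIntegrable (fun s => (F1 s)^2) volume (1-θ) 1 :=
      contOn_intInt (by fun_prop) (by linarith) (by linarith) le_rfl
    have hadd := integral_add_adjacent_intervals ia ib
    have hmono : (∫ s in ((e:ℝ)*θ)..1, (F1 s)^2) ≤ ∫ s in (1-θ)..1, (F1 s)^2 :=
      integral_mono_interval h1e heθ le_rfl
        (Filter.Eventually.of_forall (fun s => sq_nonneg _)) ic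
    linarith
  have := mul_le_mul_of_nonneg_left hsplit (sq_nonneg θ)
  linarith [hstep, hJ, this]

/-- ε-version of the core inequality, by rescaling θ. -/
private lemma core_eps {F F1 F2 : ℝ → ℝ}
    (hcF : ContinuousOn F (Icc (0:ℝ) 1)) (hcF1 : ContinuousOn F1 (Icc (0:ℝ) 1))
    (hcF2 : ContinuousOn F2 (Icc (0:ℝ) 1))
    (ftc1 : ∀ x y, (0:ℝ) ≤ x → x ≤ y → y ≤ 1 → (∫ t in x..y, F1 t) = F y - F x)
    (ftc2 : ∀ x y, (0:ℝ) ≤ x → x ≤ y → y ≤ 1 → (∫ t in x..y, F2 t) = F1 y - F1 x)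
    {θ ε : ℝ} (hθ0 : 0 < θ) (hθ1 : θ ≤ 1) (hε0 : 0 < ε) (hε1 : ε ≤ 1) :
    θ^2 * ∫ s in (0:ℝ)..1, (F1 s)^2 ≤
      (1152^2/ε) * (∫ s in (0:ℝ)..1, (F s)^2) + ε * θ^4 * ∫ s in (0:ℝ)..1, (F2 s)^2 := by
  set A := ∫ s in (0:ℝ)..1, (F s)^2 with hA
  set B := ∫ s in (0:ℝ)..1, (F1 s)^2 with hB
  set C := ∫ s in (0:ℝ)..1, (F2 s)^2 with hC
  have hA0 : 0 ≤ A := integral_nonneg zero_le_one (fun u _ => sq_nonneg _)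
  have hB0 : 0 ≤ B := integral_nonneg zero_le_one (fun u _ => sq_nonneg _)
  have hC0 : 0 ≤ C := integral_nonneg zero_le_one (fun u _ => sq_nonneg _)
  clear_value A B C
  set t := Real.sqrt (1152/ε) with htdef
  have ht0 : 0 < t := Real.sqrt_pos.mpr (by positivity)
  have ht2 : t^2 = 1152/ε := Real.sq_sqrt (by positivity)
  have ht1 : 1 ≤ t := by
    rw [htdef]
    rw [Real.le_sqrt zero_le_one (by positivity)]
    rw [le_div_iff₀ hε0]; linarith
  have hθ'0 : 0 < θ/t := div_pos hθ0 ht0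
  have hθ'1 : θ/t ≤ 1 := by
    rw [div_le_one ht0]; linarith
  have h := core_interp hcF hcF1 hcF2 ftc1 ftc2 hθ'0 hθ'1
  rw [← hA, ← hB, ← hC] at h
  have k2 : (θ/t)^2 = θ^2*ε/1152 := by
    rw [div_pow, ht2, div_div_eq_mul_div]
  have k4 : (θ/t)^4 = (θ^2*ε/1152)^2 := by
    rw [show (θ/t)^4 = ((θ/t)^2)^2 from by ring, k2]
  rw [k2, k4] at h
  have hmul := mul_le_mul_of_nonneg_left h (by positivity : (0:ℝ) ≤ 1152/ε)
  have eL : 1152/ε * (θ^2*ε/1152 * B) = θ^2 * B := by field_simp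
  have eR : 1152/ε * (1152*A + 12*(θ^2*ε/1152)^2*C) = 1152^2/ε*A + ε*θ^4*C/96 := by
    field_simp; ring
  rw [eL, eR] at hmul
  have h1 : 0 ≤ ε*θ^4*C := by positivity
  linarith

/-- The squared L² norm of the j-th derivative. -/
private noncomputable def NN (j : ℕ) (g : ℝ → ℝ) : ℝ :=
  ∫ s in (0:ℝ)..1, (iteratedDerivWithin j g (Icc (0:ℝ) 1) s)^2

private lemma NN_nonneg (j : ℕ) (g : ℝ → ℝ) : 0 ≤ NN j g :=
  intervalIntegral.integral_nonneg zero_le_one (fun u _ => sq_nonneg _)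

private lemma D_cont {m j : ℕ} {g : ℝ → ℝ} (hg : ContDiffOn ℝ m g (Icc (0:ℝ) 1))
    (hj : j ≤ m) : ContinuousOn (iteratedDerivWithin j g (Icc (0:ℝ) 1)) (Icc (0:ℝ) 1) :=
  hg.continuousOn_iteratedDerivWithin (by exact_mod_cast hj) (uniqueDiffOn_Icc one_pos)

private lemma D_ftc {m j : ℕ} {g : ℝ → ℝ} (hg : ContDiffOn ℝ m g (Icc (0:ℝ) 1))
    (hj : j < m) : ∀ x y, (0:ℝ) ≤ x → x ≤ y → y ≤ 1 →
      (∫ t in x..y, iteratedDerivWithin (j+1) g (Icc (0:ℝ) 1) t) =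
        iteratedDerivWithin j g (Icc (0:ℝ) 1) y - iteratedDerivWithin j g (Icc (0:ℝ) 1) x := by
  intro x y hx hxy hy
  have hUD : UniqueDiffOn ℝ (Icc (0:ℝ) 1) := uniqueDiffOn_Icc one_pos
  apply intervalIntegral.integral_eq_sub_of_hasDeriv_right_of_le hxy
  · exact (D_cont hg hj.le).mono (Icc_subset_Icc hx hy)
  · intro t ht
    have ht01 : t ∈ Ioo (0:ℝ) 1 := ⟨lt_of_le_of_lt hx ht.1, lt_of_lt_of_le ht.2 hy⟩
    have htI : t ∈ Icc (0:ℝ) 1 := ⟨ht01.1.le, ht01.2.le⟩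
    have hmem : Icc (0:ℝ) 1 ∈ nhds t := Icc_mem_nhds ht01.1 ht01.2
    have hdiff : DifferentiableWithinAt ℝ (iteratedDerivWithin j g (Icc (0:ℝ) 1))
        (Icc (0:ℝ) 1) t :=
      (hg.differentiableOn_iteratedDerivWithin (by exact_mod_cast hj) hUD) t htI
    have hd := hdiff.hasDerivWithinAt
    rw [← iteratedDerivWithin_succ] at hd
    exact (hd.hasDerivAt hmem).hasDerivWithinAt
  · exact contOn_intInt (D_cont hg hj) hx hxy hy

private lemma one_step {m i : ℕ} {g : ℝ → ℝ} (hg : ContDiffOn ℝ m g (Icc (0:ℝ) 1))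
    (hi : i + 2 ≤ m) {θ ε : ℝ} (hθ0 : 0 < θ) (hθ1 : θ ≤ 1) (hε0 : 0 < ε) (hε1 : ε ≤ 1) :
    θ^2 * NN (i+1) g ≤ (1152^2/ε) * NN i g + ε * θ^4 * NN (i+2) g := by
  have h := core_eps (D_cont hg (by omega)) (D_cont hg (show i+1 ≤ m by omega))
    (D_cont hg hi) (D_ftc hg (show i < m by omega))
    (D_ftc hg (show i+1 < m by omega)) hθ0 hθ1 hε0 hε1
  exact h

/-- Claim A: ∀ 1 ≤ j, j+1 ≤ m, δ ∈ (0,1]: θ^{2j} N_j ≤ K N_0 + δ θ^{2(j+1)} N_{j+1}. -/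
private lemma claimA (m : ℕ) : ∀ j : ℕ, 1 ≤ j → j + 1 ≤ m → ∀ δ : ℝ, 0 < δ → δ ≤ 1 →
    ∃ K : ℝ, 0 < K ∧ ∀ g : ℝ → ℝ, ContDiffOn ℝ m g (Icc (0:ℝ) 1) →
      ∀ θ : ℝ, 0 < θ → θ ≤ 1 →
      θ^(2*j) * NN j g ≤ K * NN 0 g + δ * (θ^(2*(j+1)) * NN (j+1) g) := by
  intro j
  induction j with
  | zero => omega
  | succ i ih =>
    intro _ hj1 δ hδ0 hδ1
    rcases Nat.eq_zero_or_pos i with hi0 | hi1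
    · -- base case j = 1
      subst hi0
      refine ⟨1152^2/δ, by positivity, fun g hg θ hθ0 hθ1 => ?_⟩
      have h := one_step (i := 0) hg (by omega) hθ0 hθ1 hδ0 hδ1
      have e1 : θ^(2*1) = θ^2 := by norm_num
      have e2 : θ^(2*(1+1)) = θ^4 := by norm_num
      rw [e1, e2]
      linarith [h]
    · -- inductive step
      have hi2 : i + 2 ≤ m := by omega
      set ε : ℝ := δ/2 with hε
      have hε0 : 0 < ε := by positivity
      have hε1 : ε ≤ 1 := by rw [hε]; linarith
      set δ' : ℝ := min 1 (ε^2/(2*1152^2)) with hδ'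
      have hδ'0 : 0 < δ' := lt_min one_pos (by positivity)
      have hδ'1 : δ' ≤ 1 := min_le_left _ _
      obtain ⟨K', hK'0, hK'⟩ := ih hi1 (by omega) δ' hδ'0 hδ'1
      refine ⟨2*(1152^2/ε)*K', by positivity, fun g hg θ hθ0 hθ1 => ?_⟩
      have hos := one_step (i := i) hg hi2 hθ0 hθ1 hε0 hε1
      have hihg := hK' g hg θ hθ0 hθ1
      -- multiply one_step by θ^(2*i)
      have hmul := mul_le_mul_of_nonneg_left hos (le_of_lt (pow_pos hθ0 (2*i)))
      have eA : θ^(2*i) * (θ^2 * NN (i+1) g) = θ^(2*(i+1)) * NN (i+1) g := by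
        rw [← mul_assoc, ← pow_add]; ring_nf
      have eB : θ^(2*i) * ((1152^2/ε) * NN i g + ε * θ^4 * NN (i+2) g)
          = (1152^2/ε) * (θ^(2*i) * NN i g) + ε * (θ^(2*(i+2)) * NN (i+2) g) := by
        rw [show (2*(i+2)) = 2*i + 4 from by ring, pow_add]; ring
      rw [eA, eB] at hmul
      -- absorb
      have habs : (1152^2/ε) * δ' ≤ 1/2 := by
        have h1 : δ' ≤ ε^2/(2*1152^2) := min_le_right _ _
        have h2 : (0:ℝ) < 1152^2/ε := by positivity
        calc (1152^2/ε) * δ' ≤ (1152^2/ε) * (ε^2/(2*1152^2)) :=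
              mul_le_mul_of_nonneg_left h1 h2.le
          _ = ε/2 := by field_simp
          _ ≤ 1/2 := by linarith
      have hN1 : 0 ≤ θ^(2*(i+1)) * NN (i+1) g :=
        mul_nonneg (le_of_lt (pow_pos hθ0 _)) (NN_nonneg _ _)
      have hstep2 : (1152^2/ε) * (θ^(2*i) * NN i g) ≤
          (1152^2/ε) * (K' * NN 0 g + δ' * (θ^(2*(i+1)) * NN (i+1) g)) :=
        mul_le_mul_of_nonneg_left hihg (by positivity)
      have hh : (1152^2/ε) * (δ' * (θ^(2*(i+1)) * NN (i+1) g)) ≤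
          (1/2) * (θ^(2*(i+1)) * NN (i+1) g) := by
        rw [← mul_assoc]
        exact mul_le_mul_of_nonneg_right habs hN1
      have hfinal : θ^(2*(i+1)) * NN (i+1) g ≤
          (1152^2/ε)*K'* NN 0 g + (1/2) * (θ^(2*(i+1)) * NN (i+1) g)
            + ε * (θ^(2*(i+2)) * NN (i+2) g) := by
        have := hmul.trans (by linarith [hstep2, hh] :
          (1152^2/ε) * (θ^(2*i) * NN i g) + ε * (θ^(2*(i+2)) * NN (i+2) g) ≤
            (1152^2/ε)*K'* NN 0 g + (1/2) * (θ^(2*(i+1)) * NN (i+1) g)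
              + ε * (θ^(2*(i+2)) * NN (i+2) g))
        linarith [this]
      have : δ = 2*ε := by rw [hε]; ring
      rw [this]
      linarith [hfinal]

/-- Claim C: interpolation between 0 and m. -/
private lemma claimC (m : ℕ) : ∀ j : ℕ, j ≤ m → ∃ c : ℝ, 0 < c ∧
    ∀ g : ℝ → ℝ, ContDiffOn ℝ m g (Icc (0:ℝ) 1) → ∀ θ : ℝ, 0 < θ → θ ≤ 1 →
      θ^(2*j) * NN j g ≤ c * (NN 0 g + θ^(2*m) * NN m g) := by
  suffices H : ∀ d j : ℕ, j + d = m → ∃ c : ℝ, 0 < c ∧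
      ∀ g : ℝ → ℝ, ContDiffOn ℝ m g (Icc (0:ℝ) 1) → ∀ θ : ℝ, 0 < θ → θ ≤ 1 →
        θ^(2*j) * NN j g ≤ c * (NN 0 g + θ^(2*m) * NN m g) by
    intro j hj
    exact H (m - j) j (by omega)
  intro d
  induction d with
  | zero =>
    intro j hj
    refine ⟨1, one_pos, fun g hg θ hθ0 hθ1 => ?_⟩
    have hjm : j = m := by omega
    subst hjm
    have := NN_nonneg 0 g
    linarith
  | succ d ih =>
    intro j hj
    rcases Nat.eq_zero_or_pos j with hj0 | hj1
    · subst hj0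
      refine ⟨1, one_pos, fun g hg θ hθ0 hθ1 => ?_⟩
      have h1 := NN_nonneg m g
      have h2 : 0 ≤ θ^(2*m) * NN m g := mul_nonneg (le_of_lt (pow_pos hθ0 _)) h1
      simp only [Nat.mul_zero, pow_zero, one_mul]
      linarith
    · obtain ⟨K, hK0, hA⟩ := claimA m j hj1 (by omega) 1 one_pos le_rfl
      obtain ⟨c', hc'0, hC⟩ := ih (j+1) (by omega)
      refine ⟨K + c', by positivity, fun g hg θ hθ0 hθ1 => ?_⟩
      have h1 := hA g hg θ hθ0 hθ1
      have h2 := hC g hg θ hθ0 hθ1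
      have h3 := NN_nonneg 0 g
      have h4 : 0 ≤ θ^(2*m) * NN m g :=
        mul_nonneg (le_of_lt (pow_pos hθ0 _)) (NN_nonneg _ _)
      nlinarith [mul_nonneg hK0.le h4, h1, h2, h3]

/-- Sobolev interpolation inequality: there is a constant `c` depending only on
`m` and `j ≤ m` such that for all `g` smooth of order `m` on `[0,1]` and `θ ∈ (0,1]`,
`θ^(2j) ∫ |g^(j)|² ≤ c (∫ |g|² + θ^(2m) ∫ |g^(m)|²)`. -/
theorem sobolev_interpolation (m j : ℕ) (hj : j ≤ m) :
    ∃ c : ℝ, 0 < c ∧ ∀ g : ℝ → ℝ, ContDiffOn ℝ m g (Icc (0:ℝ) 1) →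
      ∀ θ ∈ Ioc (0:ℝ) 1,
      θ ^ (2 * j) * ∫ s in (0:ℝ)..1, (iteratedDerivWithin j g (Icc (0:ℝ) 1) s) ^ 2 ≤
        c * ((∫ s in (0:ℝ)..1, (g s) ^ 2) +
          θ ^ (2 * m) * ∫ s in (0:ℝ)..1, (iteratedDerivWithin m g (Icc (0:ℝ) 1) s) ^ 2) := by
  obtain ⟨c, hc0, H⟩ := claimC m j hj
  refine ⟨c, hc0, fun g hg θ hθ => ?_⟩
  have h := H g hg θ hθ.1 hθ.2
  simpa [NN, iteratedDerivWithin_zero] using h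
end

section
/- Lower discrete ℓ² bound via discrepancy: under the same hypotheses, for every δ ∈ (0,1/2) such that c_F > c₁·(D*_N)^δ + D*_N, one has (c_F − c₁·(D*_N)^δ − D*_N)·∫₀¹ g(s)² ds ≤ (1/N)·Σ_{i=1}^N g(t_i)² + c₁·(D*_N)^{m(1−2δ)}·∫₀¹ |g^{(m)}(s)|² ds. -/
open Set MeasureTheory

open intervalIntegral


lemma exists_mul_le_integral {φ : ℝ → ℝ} {a c : ℝ} (hac : a < c)
    (hφ : ContinuousOn φ (Icc a c)) :
    ∃ p ∈ Icc a c, φ p * (c - a) ≤ ∫ s in a..c, φ s := by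
  obtain ⟨p, hp, hmin⟩ := isCompact_Icc.exists_isMinOn ⟨a, left_mem_Icc.2 hac.le⟩ hφ
  refine ⟨p, hp, ?_⟩
  have h1 : ∫ s in a..c, φ p ≤ ∫ s in a..c, φ s := by
    apply integral_mono_on hac.le intervalIntegrable_const
      (hφ.intervalIntegrable_of_Icc hac.le)
    exact fun x hx => hmin hx
  simpa [intervalIntegral.integral_const, smul_eq_mul, mul_comm] using h1

lemma sq_integral_abs_le {u : ℝ → ℝ} {a b : ℝ} (hab : a ≤ b)
    (hu : ContinuousOn u (Icc a b)) :
    (∫ s in a..b, |u s|) ^ 2 ≤ (b - a) * ∫ s in a..b, (u s) ^ 2 := by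
  rcases eq_or_lt_of_le hab with rfl | hab'
  · simp
  set L := b - a with hLdef
  have hL : 0 < L := by simp [hLdef]; linarith
  set I := ∫ s in a..b, |u s| with hIdef
  set Q := ∫ s in a..b, (u s) ^ 2 with hQdef
  have hiu : IntervalIntegrable (fun s => |u s|) volume a b :=
    (hu.abs).intervalIntegrable_of_Icc hab
  have hiq : IntervalIntegrable (fun s => (u s) ^ 2) volume a b :=
    (hu.pow 2).intervalIntegrable_of_Icc hab
  have hQ0 : 0 ≤ Q := by
    apply intervalIntegral.integral_nonneg hab
    intro x _; positivity
  have key : ∀ c : ℝ, 0 < c → I ≤ Q / (2 * c) + c * L / 2 := by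
    intro c hc
    have h1 : I ≤ ∫ s in a..b, ((u s) ^ 2 / (2 * c) + c / 2) := by
      apply integral_mono_on hab hiu
      · exact (hiq.div_const _).add intervalIntegrable_const
      · intro x _
        have := sq_nonneg (|u x| - c)
        have h2 : |u x| ^ 2 = (u x) ^ 2 := sq_abs _
        rw [div_add' _ _ _ (by positivity), le_div_iff₀ (by positivity)]
        nlinarith [abs_nonneg (u x)]
    have h2 : ∫ s in a..b, ((u s) ^ 2 / (2 * c) + c / 2)
        = Q / (2 * c) + c * L / 2 := by
      rw [intervalIntegral.integral_add (hiq.div_const _) intervalIntegrable_const,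
        intervalIntegral.integral_div, intervalIntegral.integral_const]
      simp [hLdef, smul_eq_mul]; ring
    linarith
  rcases eq_or_lt_of_le hQ0 with hQz | hQpos
  · have hI0 : I ≤ 0 := by
      refine le_of_forall_pos_le_add ?_
      intro ε hε
      have := key (2 * ε / L) (by positivity)
      rw [← hQz] at this
      simp at this
      calc I ≤ 2 * ε / L * L / 2 := by simpa using this
        _ = ε := by field_simp
        _ ≤ 0 + ε := by linarith
    have hI0' : 0 ≤ I := by
      apply intervalIntegral.integral_nonneg hab; intro x _; positivity
    have : I = 0 := le_antisymm hI0 hI0'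
    rw [this]; nlinarith
  · set c := Real.sqrt (Q / L) with hcdef
    have hc : 0 < c := Real.sqrt_pos.2 (by positivity)
    have hc2 : c ^ 2 = Q / L := Real.sq_sqrt (by positivity)
    have h1 := key c hc
    have h2 : I ≤ Q / c := by
      rw [div_add' _ _ _ (by positivity)] at h1
      have hcL : c ^ 2 * L = Q := by rw [hc2]; field_simp
      have hcL' : c * L / 2 * (2 * c) = Q := by rw [← hcL]; ring
      rw [hcL'] at h1
      have h1' := (le_div_iff₀ (by positivity : (0:ℝ) < 2 * c)).1 h1
      rw [le_div_iff₀ hc]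
      linarith
    have hI0' : 0 ≤ I := by
      apply intervalIntegral.integral_nonneg hab; intro x _; positivity
    have h3 : I ^ 2 ≤ (Q / c) ^ 2 := by nlinarith [div_nonneg hQ0 hc.le]
    have h4 : (Q / c) ^ 2 = L * Q := by
      rw [div_pow, hc2]
      field_simp
    exact h4 ▸ h3
set_option maxHeartbeats 1000000 in
lemma base_interp {g₀ g₁ g₂ : ℝ → ℝ} {a b : ℝ} (hab : a < b)
    (h01 : ∀ s ∈ Icc a b, HasDerivWithinAt g₀ (g₁ s) (Icc a b) s)
    (h12 : ∀ s ∈ Icc a b, HasDerivWithinAt g₁ (g₂ s) (Icc a b) s)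
    (hc0 : ContinuousOn g₀ (Icc a b)) (hc1 : ContinuousOn g₁ (Icc a b))
    (hc2 : ContinuousOn g₂ (Icc a b)) :
    ∫ s in a..b, (g₁ s) ^ 2 ≤
      648 / (b - a) ^ 2 * (∫ s in a..b, (g₀ s) ^ 2)
        + 2 * (b - a) ^ 2 * (∫ s in a..b, (g₂ s) ^ 2) := by
  set L := b - a with hLdef
  have hL : 0 < L := by simp only [hLdef]; linarith
  set I0 := ∫ s in a..b, |g₀ s| with hI0def
  set I2 := ∫ s in a..b, |g₂ s| with hI2def
  set Q0 := ∫ s in a..b, (g₀ s) ^ 2 with hQ0def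
  set Q2 := ∫ s in a..b, (g₂ s) ^ 2 with hQ2def
  have hi0 : IntervalIntegrable (fun s => |g₀ s|) volume a b :=
    (hc0.abs).intervalIntegrable_of_Icc hab.le
  have hi2 : IntervalIntegrable (fun s => |g₂ s|) volume a b :=
    (hc2.abs).intervalIntegrable_of_Icc hab.le
  have hI0nn : 0 ≤ I0 := intervalIntegral.integral_nonneg hab.le (fun x _ => abs_nonneg _)
  have hI2nn : 0 ≤ I2 := intervalIntegral.integral_nonneg hab.le (fun x _ => abs_nonneg _)
  -- point p with small |g₀|
  have hac : a < a + L / 3 := by linarith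
  have hdb : b - L / 3 < b := by linarith
  have hsub1 : Icc a (a + L / 3) ⊆ Icc a b := Icc_subset_Icc le_rfl (by linarith)
  have hsub2 : Icc (b - L / 3) b ⊆ Icc a b := Icc_subset_Icc (by linarith) le_rfl
  obtain ⟨p, hp, hple⟩ := exists_mul_le_integral hac ((hc0.abs).mono hsub1)
  obtain ⟨q, hq, hqle⟩ := exists_mul_le_integral hdb ((hc0.abs).mono hsub2)
  have hpmem : p ∈ Icc a b := hsub1 hp
  have hqmem : q ∈ Icc a b := hsub2 hq
  have hint1 : ∫ s in a..(a + L / 3), |g₀ s| ≤ I0 := by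
    apply intervalIntegral.integral_mono_interval le_rfl hac.le (by linarith)
      (Filter.Eventually.of_forall (fun x => abs_nonneg _)) hi0
  have hint2 : ∫ s in (b - L / 3)..b, |g₀ s| ≤ I0 := by
    apply intervalIntegral.integral_mono_interval (by linarith) hdb.le le_rfl
      (Filter.Eventually.of_forall (fun x => abs_nonneg _)) hi0
  have hp3 : |g₀ p| * L ≤ 3 * I0 := by
    have : |g₀ p| * (a + L / 3 - a) ≤ I0 := le_trans hple hint1
    nlinarith [abs_nonneg (g₀ p)]
  have hq3 : |g₀ q| * L ≤ 3 * I0 := by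
    have : |g₀ q| * (b - (b - L / 3)) ≤ I0 := le_trans hqle hint2
    nlinarith [abs_nonneg (g₀ q)]
  have hpq : p < q := by
    have := hp.2; have := hq.1; linarith
  -- MVT for g₀ on [p,q]
  obtain ⟨ξ, hξ, hξeq⟩ := exists_hasDerivAt_eq_slope g₀ g₁ hpq
    (hc0.mono (Icc_subset_Icc hpmem.1 hqmem.2))
    (fun x hx => by
      have hxab : x ∈ Ioo a b := ⟨lt_of_le_of_lt hpmem.1 hx.1, lt_of_lt_of_le hx.2 hqmem.2⟩
      exact (h01 x (Ioo_subset_Icc_self hxab)).hasDerivAt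
        (Icc_mem_nhds hxab.1 hxab.2))
  have hξab : ξ ∈ Ioo a b := ⟨lt_of_le_of_lt hpmem.1 hξ.1, lt_of_lt_of_le hξ.2 hqmem.2⟩
  have hξbd : |g₁ ξ| * L ^ 2 ≤ 18 * I0 := by
    have h1 : |g₁ ξ| * (q - p) = |g₀ q - g₀ p| := by
      rw [hξeq, abs_div, abs_of_pos (by linarith : (0:ℝ) < q - p),
        div_mul_cancel₀ _ (by linarith : q - p ≠ 0)]
    have h2 : |g₀ q - g₀ p| ≤ |g₀ q| + |g₀ p| := abs_sub _ _
    have h3 : L / 3 ≤ q - p := by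
      have := hp.2; have := hq.1; linarith
    nlinarith [abs_nonneg (g₁ ξ), abs_nonneg (g₀ p), abs_nonneg (g₀ q)]
  -- bound on |g₁ x| for all x
  set M := 18 * I0 / L ^ 2 + I2 with hMdef
  have hM : ∀ x ∈ Icc a b, |g₁ x| ≤ M := by
    intro x hx
    have huIcc : uIcc ξ x ⊆ Icc a b := uIcc_subset_Icc (Ioo_subset_Icc_self hξab) hx
    have hFTC : ∫ s in ξ..x, g₂ s = g₁ x - g₁ ξ := by
      apply intervalIntegral.integral_eq_sub_of_hasDeriv_right
        (hc1.mono huIcc)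
        (fun y hy => by
          have hyab : y ∈ Ioo a b := by
            constructor
            · exact lt_of_le_of_lt (le_min hξab.1.le hx.1) hy.1
            · exact lt_of_lt_of_le hy.2 (max_le hξab.2.le hx.2)
          exact ((h12 y (Ioo_subset_Icc_self hyab)).hasDerivAt
            (Icc_mem_nhds hyab.1 hyab.2)).hasDerivWithinAt)
        ((hc2.mono huIcc).intervalIntegrable)
    have habs : |∫ s in ξ..x, g₂ s| ≤ I2 := by
      rcases le_total ξ x with hxle | hxle
      · calc |∫ s in ξ..x, g₂ s| ≤ ∫ s in ξ..x, |g₂ s| :=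
            intervalIntegral.abs_integral_le_integral_abs hxle
          _ ≤ I2 := intervalIntegral.integral_mono_interval hξab.1.le hxle hx.2
              (Filter.Eventually.of_forall (fun y => abs_nonneg _)) hi2
      · rw [intervalIntegral.integral_symm]
        rw [abs_neg]
        calc |∫ s in x..ξ, g₂ s| ≤ ∫ s in x..ξ, |g₂ s| :=
            intervalIntegral.abs_integral_le_integral_abs hxle
          _ ≤ I2 := intervalIntegral.integral_mono_interval hx.1 hxle hξab.2.le
              (Filter.Eventually.of_forall (fun y => abs_nonneg _)) hi2
    have hξ' : |g₁ ξ| ≤ 18 * I0 / L ^ 2 := by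
      rw [le_div_iff₀ (by positivity)]
      linarith
    have : g₁ x = g₁ ξ + ∫ s in ξ..x, g₂ s := by linarith [hFTC]
    calc |g₁ x| = |g₁ ξ + ∫ s in ξ..x, g₂ s| := by rw [← this]
      _ ≤ |g₁ ξ| + |∫ s in ξ..x, g₂ s| := abs_add_le _ _
      _ ≤ 18 * I0 / L ^ 2 + I2 := add_le_add hξ' habs
  have hMnn : 0 ≤ M := by
    have := hM a (left_mem_Icc.2 hab.le)
    exact le_trans (abs_nonneg _) this
  -- integrate the square bound
  have hsq : ∫ s in a..b, (g₁ s) ^ 2 ≤ L * M ^ 2 := by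
    have h1 : ∫ s in a..b, (g₁ s) ^ 2 ≤ ∫ s in a..b, M ^ 2 := by
      apply integral_mono_on hab.le
        ((hc1.pow 2).intervalIntegrable_of_Icc hab.le) intervalIntegrable_const
      intro x hx
      calc (g₁ x) ^ 2 = |g₁ x| ^ 2 := (sq_abs _).symm
        _ ≤ M ^ 2 := by nlinarith [hM x hx, abs_nonneg (g₁ x)]
    simpa [intervalIntegral.integral_const, smul_eq_mul, mul_comm] using h1
  have hCS0 : I0 ^ 2 ≤ L * Q0 := sq_integral_abs_le hab.le hc0
  have hCS2 : I2 ^ 2 ≤ L * Q2 := sq_integral_abs_le hab.le hc2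
  have hQ0nn : 0 ≤ Q0 := intervalIntegral.integral_nonneg hab.le (fun x _ => sq_nonneg _)
  have hQ2nn : 0 ≤ Q2 := intervalIntegral.integral_nonneg hab.le (fun x _ => sq_nonneg _)
  have hM2 : M ^ 2 ≤ 2 * (18 * I0 / L ^ 2) ^ 2 + 2 * I2 ^ 2 := by
    rw [hMdef]
    nlinarith [sq_nonneg (18 * I0 / L ^ 2 - I2)]
  have hLne : L ≠ 0 := ne_of_gt hL
  have hfin : L * M ^ 2 ≤ 648 / L ^ 2 * Q0 + 2 * L ^ 2 * Q2 := by
    have e1 : L * M ^ 2 ≤ L * (2 * (18 * I0 / L ^ 2) ^ 2 + 2 * I2 ^ 2) :=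
      mul_le_mul_of_nonneg_left hM2 hL.le
    have e2 : L * (2 * (18 * I0 / L ^ 2) ^ 2 + 2 * I2 ^ 2)
        = 648 * I0 ^ 2 / L ^ 3 + 2 * L * I2 ^ 2 := by
      field_simp
      ring
    have e4 : 648 * I0 ^ 2 / L ^ 3 ≤ 648 * (L * Q0) / L ^ 3 := by gcongr
    have e5 : 648 * (L * Q0) / L ^ 3 = 648 / L ^ 2 * Q0 := by
      field_simp
    have e6 : 2 * L * I2 ^ 2 ≤ 2 * L ^ 2 * Q2 := by nlinarith
    calc L * M ^ 2 ≤ L * (2 * (18 * I0 / L ^ 2) ^ 2 + 2 * I2 ^ 2) := e1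
      _ = 648 * I0 ^ 2 / L ^ 3 + 2 * L * I2 ^ 2 := e2
      _ ≤ 648 * (L * Q0) / L ^ 3 + 2 * L ^ 2 * Q2 := add_le_add e4 e6
      _ = 648 / L ^ 2 * Q0 + 2 * L ^ 2 * Q2 := by rw [e5]
  have final := hsq.trans hfin
  rw [hQ0def, hQ2def] at final
  exact final
lemma scale2 {g₀ g₁ g₂ : ℝ → ℝ}
    (h01 : ∀ s ∈ Icc (0:ℝ) 1, HasDerivWithinAt g₀ (g₁ s) (Icc (0:ℝ) 1) s)
    (h12 : ∀ s ∈ Icc (0:ℝ) 1, HasDerivWithinAt g₁ (g₂ s) (Icc (0:ℝ) 1) s)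
    (hc0 : ContinuousOn g₀ (Icc (0:ℝ) 1)) (hc1 : ContinuousOn g₁ (Icc (0:ℝ) 1))
    (hc2 : ContinuousOn g₂ (Icc (0:ℝ) 1)) {h : ℝ} (hh0 : 0 < h) (hh1 : h ≤ 1) :
    ∫ s in (0:ℝ)..1, (g₁ s) ^ 2 ≤
      2592 / h ^ 2 * (∫ s in (0:ℝ)..1, (g₀ s) ^ 2)
        + 2 * h ^ 2 * (∫ s in (0:ℝ)..1, (g₂ s) ^ 2) := by
  set n := ⌈1 / h⌉₊ with hndef
  have hn1 : 1 ≤ n := Nat.one_le_ceil_iff.2 (by positivity)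
  have hnR : (0:ℝ) < n := by exact_mod_cast hn1
  set L := 1 / (n:ℝ) with hLdef
  have hL0 : 0 < L := by positivity
  have hLh : L ≤ h := by
    rw [hLdef, div_le_iff₀ hnR]
    have h1 : 1 / h ≤ (n:ℝ) := Nat.le_ceil _
    rw [div_le_iff₀ hh0] at h1
    linarith [mul_comm h (n:ℝ)]
  have hhL : h ≤ 2 * L := by
    have h1 : (n:ℝ) ≤ 1 / h + 1 := le_of_lt (Nat.ceil_lt_add_one (by positivity))
    have h2 : 1 / h + 1 ≤ 2 / h := by
      rw [div_add' _ _ _ (ne_of_gt hh0), div_le_div_iff₀ hh0 hh0]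
      nlinarith
    have h3 : (n:ℝ) ≤ 2 / h := le_trans h1 h2
    have h4 : h * (n:ℝ) ≤ 2 := by
      calc h * (n:ℝ) ≤ h * (2 / h) := mul_le_mul_of_nonneg_left h3 hh0.le
        _ = 2 := by field_simp
    rw [hLdef, show (2:ℝ) * (1 / (n:ℝ)) = 2 / (n:ℝ) by ring, le_div_iff₀ hnR]
    linarith [mul_comm h (n:ℝ)]
  set a : ℕ → ℝ := fun j => j * L with hadef
  have ha0 : a 0 = 0 := by simp [hadef]
  have han : a n = 1 := by
    rw [hadef]; simp only [hLdef]; field_simp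
  have hamono : ∀ j k : ℕ, j ≤ k → a j ≤ a k := by
    intro j k hjk
    simp only [hadef]
    apply mul_le_mul_of_nonneg_right _ hL0.le
    exact_mod_cast hjk
  have hasub : ∀ j : ℕ, j + 1 ≤ n → Icc (a j) (a (j+1)) ⊆ Icc (0:ℝ) 1 := by
    intro j hj
    apply Icc_subset_Icc
    · rw [← ha0]; exact hamono 0 j (Nat.zero_le _)
    · rw [← han]; exact hamono (j+1) n hj
  have hstep : ∀ j : ℕ, a (j+1) - a j = L := by
    intro j; simp only [hadef]; push_cast; ring
  have halt : ∀ j : ℕ, a j < a (j + 1) := by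
    intro j
    have := hstep j; linarith
  -- per-interval estimate
  have hper : ∀ j : ℕ, j + 1 ≤ n →
      ∫ s in (a j)..(a (j+1)), (g₁ s) ^ 2 ≤
        648 / L ^ 2 * (∫ s in (a j)..(a (j+1)), (g₀ s) ^ 2)
          + 2 * L ^ 2 * (∫ s in (a j)..(a (j+1)), (g₂ s) ^ 2) := by
    intro j hj
    have hsub := hasub j hj
    have := base_interp (halt j)
      (fun s hs => (h01 s (hsub hs)).mono hsub)
      (fun s hs => (h12 s (hsub hs)).mono hsub)
      (hc0.mono hsub) (hc1.mono hsub) (hc2.mono hsub)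
    rwa [hstep j] at this
  -- integrability on each subinterval
  have hint : ∀ (u : ℝ → ℝ), ContinuousOn u (Icc (0:ℝ) 1) → ∀ j : ℕ, j + 1 ≤ n →
      IntervalIntegrable (fun s => (u s) ^ 2) volume (a j) (a (j+1)) := by
    intro u hu j hj
    exact ((hu.mono (hasub j hj)).pow 2).intervalIntegrable_of_Icc (halt j).le
  have hsum : ∀ (u : ℝ → ℝ), ContinuousOn u (Icc (0:ℝ) 1) →
      ∑ j ∈ Finset.range n, ∫ s in (a j)..(a (j+1)), (u s) ^ 2
        = ∫ s in (0:ℝ)..1, (u s) ^ 2 := by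
    intro u hu
    have := intervalIntegral.sum_integral_adjacent_intervals
      (f := fun s => (u s) ^ 2) (μ := volume) (a := a) (n := n)
      (fun k hk => hint u hu k hk)
    rw [ha0, han] at this
    exact this
  have hbig : ∫ s in (0:ℝ)..1, (g₁ s) ^ 2 ≤
      648 / L ^ 2 * (∫ s in (0:ℝ)..1, (g₀ s) ^ 2)
        + 2 * L ^ 2 * (∫ s in (0:ℝ)..1, (g₂ s) ^ 2) := by
    rw [← hsum g₁ hc1, ← hsum g₀ hc0, ← hsum g₂ hc2]
    rw [Finset.mul_sum, Finset.mul_sum, ← Finset.sum_add_distrib]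
    apply Finset.sum_le_sum
    intro j hj
    exact hper j (Finset.mem_range.1 hj)
  have hQ0nn : 0 ≤ ∫ s in (0:ℝ)..1, (g₀ s) ^ 2 :=
    intervalIntegral.integral_nonneg zero_le_one (fun x _ => sq_nonneg _)
  have hQ2nn : 0 ≤ ∫ s in (0:ℝ)..1, (g₂ s) ^ 2 :=
    intervalIntegral.integral_nonneg zero_le_one (fun x _ => sq_nonneg _)
  have hc648 : 648 / L ^ 2 ≤ 2592 / h ^ 2 := by
    rw [div_le_div_iff₀ (by positivity) (by positivity)]
    nlinarith
  have hc2' : 2 * L ^ 2 ≤ 2 * h ^ 2 := by nlinarith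
  calc ∫ s in (0:ℝ)..1, (g₁ s) ^ 2
      ≤ 648 / L ^ 2 * (∫ s in (0:ℝ)..1, (g₀ s) ^ 2)
        + 2 * L ^ 2 * (∫ s in (0:ℝ)..1, (g₂ s) ^ 2) := hbig
    _ ≤ 2592 / h ^ 2 * (∫ s in (0:ℝ)..1, (g₀ s) ^ 2)
        + 2 * h ^ 2 * (∫ s in (0:ℝ)..1, (g₂ s) ^ 2) := by
        apply add_le_add
        · exact mul_le_mul_of_nonneg_right hc648 hQ0nn
        · exact mul_le_mul_of_nonneg_right hc2' hQ2nn

lemma scale_all : ∀ m : ℕ, 1 ≤ m → ∃ C : ℝ, 1 ≤ C ∧ ∀ G : ℕ → ℝ → ℝ,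
    (∀ k < m, ∀ s ∈ Icc (0:ℝ) 1, HasDerivWithinAt (G k) (G (k+1) s) (Icc (0:ℝ) 1) s) →
    (∀ k ≤ m, ContinuousOn (G k) (Icc (0:ℝ) 1)) →
    ∀ h : ℝ, 0 < h → h ≤ 1 →
    ∫ s in (0:ℝ)..1, (G 1 s) ^ 2 ≤
      C / h ^ 2 * (∫ s in (0:ℝ)..1, (G 0 s) ^ 2)
        + C * h ^ (2 * (m - 1)) * (∫ s in (0:ℝ)..1, (G m s) ^ 2) := by
  intro m
  induction m with
  | zero => intro h; omega
  | succ m ih =>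
    intro _
    rcases Nat.eq_zero_or_pos m with rfl | hm
    · -- m + 1 = 1
      refine ⟨1, le_rfl, ?_⟩
      intro G hchain hcont h hh0 hh1
      have hN0 : 0 ≤ ∫ s in (0:ℝ)..1, (G 0 s) ^ 2 :=
        intervalIntegral.integral_nonneg zero_le_one (fun x _ => sq_nonneg _)
      simp only [Nat.sub_self, pow_zero]
      have h1 : 0 ≤ 1 / h ^ 2 * (∫ s in (0:ℝ)..1, (G 0 s) ^ 2) := by positivity
      linarith
    · obtain ⟨C, hC1, hCprop⟩ := ih hm
      have hCpos : (0:ℝ) < C := lt_of_lt_of_le one_pos hC1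
      refine ⟨27648 * C, by linarith, ?_⟩
      intro G hchain hcont h hh0 hh1
      set N0 := ∫ s in (0:ℝ)..1, (G 0 s) ^ 2 with hN0def
      set N1 := ∫ s in (0:ℝ)..1, (G 1 s) ^ 2 with hN1def
      set N2 := ∫ s in (0:ℝ)..1, (G 2 s) ^ 2 with hN2def
      set Nm1 := ∫ s in (0:ℝ)..1, (G (m+1) s) ^ 2 with hNm1def
      have hN0nn : 0 ≤ N0 :=
        intervalIntegral.integral_nonneg zero_le_one (fun x _ => sq_nonneg _)
      have hNm1nn : 0 ≤ Nm1 :=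
        intervalIntegral.integral_nonneg zero_le_one (fun x _ => sq_nonneg _)
      -- IH applied to shifted chain
      have hshift := hCprop (fun k => G (k+1))
        (fun k hk s hs => hchain (k+1) (by omega) s hs)
        (fun k hk => hcont (k+1) (by omega)) h hh0 hh1
      -- hshift : N2 ≤ C/h^2 * N1 + C * h^(2*(m-1)) * Nm1
      set s := h / Real.sqrt (8 * C) with hsdef
      have hsq8 : (0:ℝ) < Real.sqrt (8 * C) := Real.sqrt_pos.2 (by positivity)
      have hs0 : 0 < s := by positivity
      have hs2 : s ^ 2 = h ^ 2 / (8 * C) := by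
        rw [hsdef, div_pow, Real.sq_sqrt (by positivity)]
      have hs1 : s ≤ 1 := by
        have h8 : (1:ℝ) ≤ Real.sqrt (8 * C) := by
          rw [show (1:ℝ) = Real.sqrt 1 by simp]
          exact Real.sqrt_le_sqrt (by linarith)
        rw [hsdef, div_le_one hsq8]
        linarith
      have hf1 := scale2 (hchain 0 (by omega)) (hchain 1 (by omega))
        (hcont 0 (by omega)) (hcont 1 (by omega)) (hcont 2 (by omega)) hs0 hs1
      -- hf1 : N1 ≤ 2592 / s^2 * N0 + 2 * s^2 * N2
      have hpow : h ^ (2 * m) = h ^ 2 * h ^ (2 * (m - 1)) := by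
        rw [← pow_add]; congr 1; omega
      have hg1 : 2 * s ^ 2 * N2 ≤
          2 * s ^ 2 * (C / h ^ 2 * N1 + C * h ^ (2 * (m-1)) * Nm1) := by
        apply mul_le_mul_of_nonneg_left hshift (by positivity)
      have hg2 : 2 * s ^ 2 * (C / h ^ 2 * N1 + C * h ^ (2 * (m-1)) * Nm1)
          = N1 / 4 + h ^ (2 * m) / 4 * Nm1 := by
        rw [hs2, hpow]
        field_simp
        ring
      have hg3 : 2592 / s ^ 2 = 20736 * C / h ^ 2 := by
        rw [hs2]
        field_simp
        ring
      have hmono : 20736 * C / h ^ 2 * N0 ≤ 27648 * C / h ^ 2 * N0 := by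
        have hx : 0 ≤ C / h ^ 2 * N0 := by positivity
        have e1 : 20736 * C / h ^ 2 * N0 = 20736 * (C / h ^ 2 * N0) := by ring
        have e2 : 27648 * C / h ^ 2 * N0 = 27648 * (C / h ^ 2 * N0) := by ring
        rw [e1, e2]
        linarith
      have key : N1 ≤ 20736 * C / h ^ 2 * N0 + N1 / 4 + h ^ (2 * m) / 4 * Nm1 := by
        calc N1 ≤ 2592 / s ^ 2 * N0 + 2 * s ^ 2 * N2 := hf1
          _ ≤ 2592 / s ^ 2 * N0 + (N1 / 4 + h ^ (2 * m) / 4 * Nm1) := by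
              rw [← hg2]; linarith
          _ = 20736 * C / h ^ 2 * N0 + N1 / 4 + h ^ (2 * m) / 4 * Nm1 := by
              rw [hg3]; ring
      have goalpow : (2 : ℕ) * (m + 1 - 1) = 2 * m := by omega
      rw [goalpow]
      have hx : 0 ≤ h ^ (2 * m) * Nm1 := by positivity
      have f6 : (1/3) * (h ^ (2 * m) * Nm1) ≤ 27648 * C * (h ^ (2 * m) * Nm1) := by
        nlinarith [mul_nonneg (sub_nonneg.2 hC1) hx]
      have key2 : N1 ≤ 20736 * (C / h ^ 2 * N0) + N1 / 4 + (1/4) * (h ^ (2 * m) * Nm1) := by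
        calc N1 ≤ 20736 * C / h ^ 2 * N0 + N1 / 4 + h ^ (2 * m) / 4 * Nm1 := key
          _ = 20736 * (C / h ^ 2 * N0) + N1 / 4 + (1/4) * (h ^ (2 * m) * Nm1) := by ring
      have key3 : N1 ≤ 27648 * (C / h ^ 2 * N0) + 27648 * C * (h ^ (2 * m) * Nm1) := by
        linarith
      calc N1 ≤ 27648 * (C / h ^ 2 * N0) + 27648 * C * (h ^ (2 * m) * Nm1) := key3
        _ = 27648 * C / h ^ 2 * N0 + 27648 * C * h ^ (2 * m) * Nm1 := by ring
set_option maxHeartbeats 1000000 in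
lemma koksma {f fd F F' : ℝ → ℝ} {N : ℕ} (hN : 0 < N) {t : Fin N → ℝ}
    (ht : ∀ i, t i ∈ Icc (0:ℝ) 1)
    (hfc : ContinuousOn f (Icc (0:ℝ) 1)) (hfdc : ContinuousOn fd (Icc (0:ℝ) 1))
    (hfd : ∀ s ∈ Icc (0:ℝ) 1, HasDerivWithinAt f (fd s) (Icc (0:ℝ) 1) s)
    (hF : ∀ s ∈ Icc (0:ℝ) 1, HasDerivAt F (F' s) s) (hF'c : ContinuousOn F' (Icc (0:ℝ) 1))
    (hF0 : F 0 = 0) (hF1 : F 1 = 1) {D : ℝ}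
    (hD : ∀ s ∈ Icc (0:ℝ) 1,
      |((Finset.univ.filter (fun i => t i ≤ s)).card : ℝ) / N - F s| ≤ D) :
    ∫ s in (0:ℝ)..1, f s * F' s ≤
      (1 / (N : ℝ)) * (∑ i, f (t i)) + D * ∫ s in (0:ℝ)..1, |fd s| := by
  have hNR : (0:ℝ) < N := by exact_mod_cast hN
  set φ : ℝ → ℝ := fun s => ((Finset.univ.filter (fun i => t i ≤ s)).card : ℝ) with hφdef
  have hFc : ContinuousOn F (Icc (0:ℝ) 1) :=
    fun s hs => ((hF s hs).continuousAt).continuousWithinAt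
  -- K1 : FTC from r to 1
  have hK1 : ∀ r ∈ Icc (0:ℝ) 1, ∫ s in r..1, fd s = f 1 - f r := by
    intro r hr
    apply intervalIntegral.integral_eq_sub_of_hasDeriv_right_of_le hr.2
      (hfc.mono (Icc_subset_Icc hr.1 le_rfl))
      (fun x hx => by
        have hx01 : x ∈ Ioo (0:ℝ) 1 := ⟨lt_of_le_of_lt hr.1 hx.1, hx.2⟩
        exact ((hfd x (Ioo_subset_Icc_self hx01)).hasDerivAt
          (Icc_mem_nhds hx01.1 hx01.2)).hasDerivWithinAt)
      ((hfdc.mono (Icc_subset_Icc hr.1 le_rfl)).intervalIntegrable_of_Icc hr.2)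
  have hfdInt : IntegrableOn fd (Ioc (0:ℝ) 1) volume := by
    have h1 : IntervalIntegrable fd volume 0 1 :=
      hfdc.intervalIntegrable_of_Icc zero_le_one
    rwa [intervalIntegrable_iff_integrableOn_Ioc_of_le zero_le_one] at h1
  have hind : ∀ r : ℝ, IntervalIntegrable (fun s => (Ici r).indicator fd s) volume 0 1 := by
    intro r
    rw [intervalIntegrable_iff_integrableOn_Ioc_of_le zero_le_one]
    exact hfdInt.indicator measurableSet_Ici
  -- K2 : indicator integral
  have hK2 : ∀ r ∈ Icc (0:ℝ) 1,
      ∫ s in (0:ℝ)..1, (Ici r).indicator fd s = ∫ s in r..1, fd s := by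
    intro r hr
    rw [intervalIntegral.integral_of_le (zero_le_one (α := ℝ)),
      intervalIntegral.integral_of_le hr.2,
      MeasureTheory.setIntegral_indicator measurableSet_Ici]
    rcases eq_or_lt_of_le hr.1 with h0 | h0
    · have hset : Ioc (0:ℝ) 1 ∩ Ici r = Ioc (0:ℝ) 1 := by
        apply inter_eq_left.2
        intro x hx
        rw [mem_Ici, ← h0]
        exact hx.1.le
      rw [hset, ← h0]
    · have hset : Ioc (0:ℝ) 1 ∩ Ici r = Icc r 1 := by
        ext x
        constructor
        · rintro ⟨⟨_, hx1⟩, hx2⟩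
          exact ⟨hx2, hx1⟩
        · rintro ⟨hx2, hx1⟩
          exact ⟨⟨lt_of_lt_of_le h0 hx2, hx1⟩, hx2⟩
      rw [hset, MeasureTheory.integral_Icc_eq_integral_Ioc]
  -- sum of indicators
  have hsum_ind : ∀ s : ℝ, ∑ i, (Ici (t i)).indicator fd s = fd s * φ s := by
    intro s
    simp only [indicator_apply, mem_Ici]
    rw [Finset.sum_ite, Finset.sum_const, Finset.sum_const_zero, add_zero,
      nsmul_eq_mul]
    rw [hφdef]
    ring
  -- K3
  have hK3 : ∑ i, (f 1 - f (t i)) = ∫ s in (0:ℝ)..1, fd s * φ s := by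
    have e1 : ∀ i : Fin N, f 1 - f (t i) = ∫ s in (0:ℝ)..1, (Ici (t i)).indicator fd s :=
      fun i => by rw [hK2 _ (ht i), hK1 _ (ht i)]
    rw [Finset.sum_congr rfl (fun i _ => e1 i),
      ← intervalIntegral.integral_finset_sum (fun i _ => hind (t i))]
    apply intervalIntegral.integral_congr
    intro s _
    exact hsum_ind s
  -- IBP
  have hintFd : IntervalIntegrable (fun s => fd s * F s) volume 0 1 :=
    (hfdc.mul hFc).intervalIntegrable_of_Icc zero_le_one
  have hintfF' : IntervalIntegrable (fun s => f s * F' s) volume 0 1 :=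
    (hfc.mul hF'c).intervalIntegrable_of_Icc zero_le_one
  have hIBP0 : ∫ s in (0:ℝ)..1, (fd s * F s + f s * F' s) = f 1 := by
    rw [intervalIntegral.integral_eq_sub_of_hasDeriv_right_of_le zero_le_one
      (hfc.mul hFc)
      (fun x hx => by
        have h1 : HasDerivAt f (fd x) x :=
          (hfd x (Ioo_subset_Icc_self hx)).hasDerivAt (Icc_mem_nhds hx.1 hx.2)
        exact (h1.mul (hF x (Ioo_subset_Icc_self hx))).hasDerivWithinAt)
      (hintFd.add hintfF')]
    rw [Pi.mul_apply, Pi.mul_apply, hF1, hF0]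
    ring
  have hIBP : ∫ s in (0:ℝ)..1, f s * F' s = f 1 - ∫ s in (0:ℝ)..1, fd s * F s := by
    rw [intervalIntegral.integral_add hintFd hintfF'] at hIBP0
    linarith
  -- integrability of fd * φ
  have hintφ : IntervalIntegrable (fun s => fd s * φ s) volume 0 1 := by
    have hfun : (fun s : ℝ => fd s * φ s) = (fun s => ∑ i, (Ici (t i)).indicator fd s) := by
      funext s
      rw [hsum_ind s]
    have h1 : IntervalIntegrable (∑ i : Fin N, fun s => (Ici (t i)).indicator fd s) volume 0 1 :=
      IntervalIntegrable.sum _ (fun i _ => hind (t i))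
    have h2 : (∑ i : Fin N, fun s => (Ici (t i)).indicator fd s)
        = (fun s : ℝ => ∑ i, (Ici (t i)).indicator fd s) := by
      funext s
      simp [Finset.sum_apply]
    rw [hfun, ← h2]
    exact h1
  -- S identity
  have hNf : ∑ i, (f 1 - f (t i)) = N * f 1 - ∑ i, f (t i) := by
    rw [Finset.sum_sub_distrib, Finset.sum_const, Finset.card_univ, Fintype.card_fin,
      nsmul_eq_mul]
  have hSid : (1 / (N:ℝ)) * (∑ i, f (t i))
      = f 1 - (1 / (N:ℝ)) * ∫ s in (0:ℝ)..1, fd s * φ s := by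
    rw [← hK3, hNf]
    field_simp
    ring
  -- pull 1/N inside
  have hempInt : IntervalIntegrable (fun s => fd s * (φ s / N)) volume 0 1 := by
    have hfun2 : (fun s : ℝ => fd s * (φ s / N)) = (fun s => (fd s * φ s) / N) := by
      funext s
      ring
    rw [hfun2]
    exact hintφ.div_const _
  have hpull : (1 / (N:ℝ)) * (∫ s in (0:ℝ)..1, fd s * φ s)
      = ∫ s in (0:ℝ)..1, fd s * (φ s / N) := by
    rw [← intervalIntegral.integral_const_mul]
    apply intervalIntegral.integral_congr
    intro s _
    field_simp
  -- difference bound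
  have hdiffInt : IntervalIntegrable (fun s => fd s * (φ s / N - F s)) volume 0 1 := by
    have hfun3 : (fun s : ℝ => fd s * (φ s / N - F s))
        = (fun s => fd s * (φ s / N) - fd s * F s) := by
      funext s
      ring
    rw [hfun3]
    exact hempInt.sub hintFd
  have hdiff : (∫ s in (0:ℝ)..1, fd s * (φ s / N)) - (∫ s in (0:ℝ)..1, fd s * F s)
      = ∫ s in (0:ℝ)..1, fd s * (φ s / N - F s) := by
    rw [← intervalIntegral.integral_sub hempInt hintFd]
    apply intervalIntegral.integral_congr
    intro s _
    ring
  have habsInt : IntervalIntegrable (fun s => |fd s| * D) volume 0 1 :=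
    ((hfdc.abs).intervalIntegrable_of_Icc zero_le_one).mul_const D
  have hbd : ∫ s in (0:ℝ)..1, fd s * (φ s / N - F s) ≤ D * ∫ s in (0:ℝ)..1, |fd s| := by
    calc ∫ s in (0:ℝ)..1, fd s * (φ s / N - F s)
        ≤ |∫ s in (0:ℝ)..1, fd s * (φ s / N - F s)| := le_abs_self _
      _ ≤ ∫ s in (0:ℝ)..1, |fd s * (φ s / N - F s)| :=
          intervalIntegral.abs_integral_le_integral_abs zero_le_one
      _ ≤ ∫ s in (0:ℝ)..1, |fd s| * D := by
          apply intervalIntegral.integral_mono_on zero_le_one hdiffInt.abs habsInt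
          intro x hx
          rw [abs_mul]
          exact mul_le_mul_of_nonneg_left (hD x hx) (abs_nonneg _)
      _ = D * ∫ s in (0:ℝ)..1, |fd s| := by
          rw [intervalIntegral.integral_mul_const]
          ring
  -- conclusion
  have : ∫ s in (0:ℝ)..1, f s * F' s
      = (1 / (N:ℝ)) * (∑ i, f (t i)) + ∫ s in (0:ℝ)..1, fd s * (φ s / N - F s) := by
    rw [hIBP, hSid, ← hdiff, hpull]
    ring
  linarith

lemma Dfacts {N : ℕ} (hN : 0 < N) {t : Fin N → ℝ}
    {F : ℝ → ℝ} (hFr : ∀ s ∈ Icc (0:ℝ) 1, 0 ≤ F s ∧ F s ≤ 1) {D : ℝ}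
    (hDdef : D = sSup ((fun s =>
      |((Finset.univ.filter (fun i => t i ≤ s)).card : ℝ) / N - F s|) '' Icc (0:ℝ) 1)) :
    0 ≤ D ∧ D ≤ 1 ∧ ∀ s ∈ Icc (0:ℝ) 1,
      |((Finset.univ.filter (fun i => t i ≤ s)).card : ℝ) / N - F s| ≤ D := by
  have hNR : (0:ℝ) < N := by exact_mod_cast hN
  have hval : ∀ s ∈ Icc (0:ℝ) 1,
      |((Finset.univ.filter (fun i => t i ≤ s)).card : ℝ) / N - F s| ≤ 1 := by
    intro s hs
    have h1 : ((Finset.univ.filter (fun i => t i ≤ s)).card : ℝ) ≤ N := by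
      have h0 := Finset.card_filter_le (Finset.univ : Finset (Fin N)) (fun i => t i ≤ s)
      have h2 : (Finset.univ : Finset (Fin N)).card = N := by simp
      rw [h2] at h0
      exact_mod_cast h0
    have h3 := hFr s hs
    have h4 : (0:ℝ) ≤ ((Finset.univ.filter (fun i => t i ≤ s)).card : ℝ) / N := by positivity
    have h5 : ((Finset.univ.filter (fun i => t i ≤ s)).card : ℝ) / N ≤ 1 := by
      rw [div_le_one hNR]; exact h1
    rw [abs_le]
    constructor <;> linarith [h3.1, h3.2]
  have hbdd : BddAbove ((fun s =>
      |((Finset.univ.filter (fun i => t i ≤ s)).card : ℝ) / N - F s|) '' Icc (0:ℝ) 1) := by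
    refine ⟨1, ?_⟩
    rintro y ⟨s, hs, rfl⟩
    exact hval s hs
  have hmem0 : ∀ s ∈ Icc (0:ℝ) 1,
      |((Finset.univ.filter (fun i => t i ≤ s)).card : ℝ) / N - F s| ≤ D := by
    intro s hs
    rw [hDdef]
    exact le_csSup hbdd (mem_image_of_mem _ hs)
  refine ⟨?_, ?_, hmem0⟩
  · exact le_trans (abs_nonneg _) (hmem0 0 (left_mem_Icc.2 zero_le_one))
  · rw [hDdef]
    apply csSup_le (Nonempty.image _ ⟨0, left_mem_Icc.2 zero_le_one⟩)
    rintro y ⟨s, hs, rfl⟩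
    exact hval s hs

set_option maxHeartbeats 2000000 in
/-- Lower discrete ℓ² bound via discrepancy: for every `δ ∈ (0,1/2)` with
`c_F > c₁ (D*_N)^δ + D*_N`,
`(c_F - c₁ (D*_N)^δ - D*_N) ∫ g² ≤ (1/N) ∑ g(t_i)² + c₁ (D*_N)^(m(1-2δ)) ∫ |g^(m)|²`. -/
theorem discrete_l2_lower_bound (m : ℕ) :
    ∃ c₁ : ℝ, 0 < c₁ ∧
    ∀ (N : ℕ), m < N → ∀ (t : Fin N → ℝ), (∀ i, t i ∈ Icc (0:ℝ) 1) →
    ∀ (g : ℝ → ℝ), ContDiffOn ℝ m g (Icc (0:ℝ) 1) →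
    ∀ (F F' : ℝ → ℝ) (cF CF : ℝ), 0 < cF →
      F 0 = 0 → F 1 = 1 →
      (∀ s ∈ Icc (0:ℝ) 1, HasDerivAt F (F' s) s) →
      ContinuousOn F' (Icc (0:ℝ) 1) →
      (∀ s ∈ Icc (0:ℝ) 1, cF < F' s ∧ F' s < CF) →
    ∀ D : ℝ,
      D = sSup ((fun s =>
        |((Finset.univ.filter (fun i => t i ≤ s)).card : ℝ) / N - F s|) '' Icc (0:ℝ) 1) →
      ∀ δ : ℝ, δ ∈ Ioo (0:ℝ) (1/2) →
        c₁ * D ^ δ + D < cF →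
        (cF - c₁ * D ^ δ - D) * (∫ s in (0:ℝ)..1, (g s) ^ 2) ≤
          (1 / (N : ℝ)) * ∑ i, (g (t i)) ^ 2 +
            c₁ * D ^ ((m : ℝ) * (1 - 2 * δ)) *
              ∫ s in (0:ℝ)..1, (iteratedDerivWithin m g (Icc (0:ℝ) 1) s) ^ 2 := by
  obtain ⟨C, hC1, hCprop⟩ :
      ∃ C : ℝ, 1 ≤ C ∧ (1 ≤ m → ∀ G : ℕ → ℝ → ℝ,
        (∀ k < m, ∀ s ∈ Icc (0:ℝ) 1, HasDerivWithinAt (G k) (G (k+1) s) (Icc (0:ℝ) 1) s) →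
        (∀ k ≤ m, ContinuousOn (G k) (Icc (0:ℝ) 1)) →
        ∀ h : ℝ, 0 < h → h ≤ 1 →
        ∫ s in (0:ℝ)..1, (G 1 s) ^ 2 ≤
          C / h ^ 2 * (∫ s in (0:ℝ)..1, (G 0 s) ^ 2)
            + C * h ^ (2 * (m - 1)) * (∫ s in (0:ℝ)..1, (G m s) ^ 2)) := by
    rcases Nat.eq_zero_or_pos m with rfl | hm
    · exact ⟨1, le_rfl, fun h => absurd h (by omega)⟩
    · obtain ⟨C, hC1, hCp⟩ := scale_all m hm
      exact ⟨C, hC1, fun _ => hCp⟩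
  refine ⟨C, lt_of_lt_of_le one_pos hC1, ?_⟩
  intro N hmN t ht g hg F F' cF CF hcF hF0 hF1 hF hF'c hF'bd D hDdef δ hδ hhyp
  have hN : 0 < N := Nat.lt_of_le_of_lt (Nat.zero_le m) hmN
  have hNR : (0:ℝ) < N := by exact_mod_cast hN
  have hNne : (N:ℝ) ≠ 0 := ne_of_gt hNR
  have hFc : ContinuousOn F (Icc (0:ℝ) 1) :=
    fun s hs => (hF s hs).continuousAt.continuousWithinAt
  have hFmono : StrictMonoOn F (Icc (0:ℝ) 1) := by
    apply strictMonoOn_of_deriv_pos (convex_Icc 0 1) hFc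
    intro x hx
    rw [interior_Icc] at hx
    rw [(hF x (Ioo_subset_Icc_self hx)).deriv]
    exact lt_trans hcF (hF'bd x (Ioo_subset_Icc_self hx)).1
  have hFr : ∀ s ∈ Icc (0:ℝ) 1, 0 ≤ F s ∧ F s ≤ 1 := by
    intro s hs
    constructor
    · rw [← hF0]
      exact hFmono.monotoneOn (left_mem_Icc.2 zero_le_one) hs hs.1
    · rw [← hF1]
      exact hFmono.monotoneOn hs (right_mem_Icc.2 zero_le_one) hs.2
  obtain ⟨hD0, hD1, hpt⟩ := Dfacts hN hFr hDdef
  have hcF1 : cF < 1 := by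
    obtain ⟨ξ, hξ, hξeq⟩ := exists_hasDerivAt_eq_slope F F' zero_lt_one hFc
      (fun x hx => hF x (Ioo_subset_Icc_self hx))
    have h1 : F' ξ = 1 := by rw [hξeq, hF0, hF1]; norm_num
    have h2 := (hF'bd ξ (Ioo_subset_Icc_self hξ)).1
    linarith
  have hgc : ContinuousOn g (Icc (0:ℝ) 1) := hg.continuousOn
  have hA0 : 0 ≤ ∫ s in (0:ℝ)..1, (g s) ^ 2 :=
    intervalIntegral.integral_nonneg zero_le_one (fun x _ => sq_nonneg _)
  have hS0 : (0:ℝ) ≤ ∑ i, (g (t i)) ^ 2 := Finset.sum_nonneg (fun i _ => sq_nonneg _)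
  have hDδ0 : 0 ≤ D ^ δ := Real.rpow_nonneg hD0 δ
  rcases Nat.eq_zero_or_pos m with rfl | hm
  · -- m = 0 case
    simp only [Nat.cast_zero, zero_mul, Real.rpow_zero, mul_one, one_mul,
      iteratedDerivWithin_zero]
    have h4 : 0 ≤ (1:ℝ)/(N:ℝ) * ∑ i, (g (t i)) ^ 2 := by positivity
    nlinarith [hA0, mul_nonneg (mul_nonneg (by linarith : (0:ℝ) ≤ C) hDδ0) hA0,
      mul_nonneg hD0 hA0, mul_nonneg (by linarith : (0:ℝ) ≤ C - cF) hA0]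
  -- m ≥ 1 case
  · set A := ∫ s in (0:ℝ)..1, (g s) ^ 2 with hAdef
    set B := ∫ s in (0:ℝ)..1, (iteratedDerivWithin m g (Icc (0:ℝ) 1) s) ^ 2 with hBdef
    set G : ℕ → ℝ → ℝ := fun k => iteratedDerivWithin k g (Icc (0:ℝ) 1) with hGdef
    have hUD : UniqueDiffOn ℝ (Icc (0:ℝ) 1) := uniqueDiffOn_Icc zero_lt_one
    have hGchain : ∀ k < m, ∀ s ∈ Icc (0:ℝ) 1,
        HasDerivWithinAt (G k) (G (k+1) s) (Icc (0:ℝ) 1) s := by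
      intro k hk s hs
      have hd : DifferentiableOn ℝ (G k) (Icc (0:ℝ) 1) :=
        hg.differentiableOn_iteratedDerivWithin (by exact_mod_cast hk) hUD
      have h1 := (hd s hs).hasDerivWithinAt
      have h2 : G (k+1) s = derivWithin (G k) (Icc (0:ℝ) 1) s :=
        by simp only [hGdef]; exact congrFun iteratedDerivWithin_succ s
      rwa [← h2] at h1
    have hGcont : ∀ k ≤ m, ContinuousOn (G k) (Icc (0:ℝ) 1) :=
      fun k hk => hg.continuousOn_iteratedDerivWithin (by exact_mod_cast hk) hUD
    have hG0 : G 0 = g := by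
      funext s
      simp [hGdef, iteratedDerivWithin_zero]
    have hgd : ∀ s ∈ Icc (0:ℝ) 1, HasDerivWithinAt g (G 1 s) (Icc (0:ℝ) 1) s := by
      intro s hs
      have h1 := hGchain 0 hm s hs
      rwa [hG0] at h1
    set N1 := ∫ s in (0:ℝ)..1, (G 1 s) ^ 2 with hN1def
    have hG1c : ContinuousOn (G 1) (Icc (0:ℝ) 1) := hGcont 1 hm
    have hN10 : 0 ≤ N1 :=
      intervalIntegral.integral_nonneg zero_le_one (fun x _ => sq_nonneg _)
    have hB0 : 0 ≤ B :=
      intervalIntegral.integral_nonneg zero_le_one (fun x _ => sq_nonneg _)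
    have hf2c : ContinuousOn (fun s => (g s) ^ 2) (Icc (0:ℝ) 1) := hgc.pow 2
    have hdc : ContinuousOn (fun s => 2 * g s * G 1 s) (Icc (0:ℝ) 1) :=
      (continuousOn_const.mul hgc).mul hG1c
    have hfderiv : ∀ s ∈ Icc (0:ℝ) 1,
        HasDerivWithinAt (fun y => (g y) ^ 2) (2 * g s * G 1 s) (Icc (0:ℝ) 1) s := by
      intro s hs
      have h1 : HasDerivWithinAt (fun y => g y * g y) _ _ s := (hgd s hs).mul (hgd s hs)
      have h2 : (fun y => (g y) ^ 2) = fun y => g y * g y := by funext y; ring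
      rw [h2]
      convert h1 using 1
      ring
    have hkok : ∫ s in (0:ℝ)..1, (g s) ^ 2 * F' s ≤
        1 / (N : ℝ) * (∑ i, (g (t i)) ^ 2)
          + D * ∫ s in (0:ℝ)..1, |2 * g s * G 1 s| :=
      koksma hN ht hf2c hdc hfderiv hF hF'c hF0 hF1 hpt
    have hlow : cF * A ≤ ∫ s in (0:ℝ)..1, (g s) ^ 2 * F' s := by
      have h1 : ∫ s in (0:ℝ)..1, cF * (g s) ^ 2 ≤ ∫ s in (0:ℝ)..1, (g s) ^ 2 * F' s := by
        apply intervalIntegral.integral_mono_on zero_le_one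
          ((continuousOn_const.mul hf2c).intervalIntegrable_of_Icc zero_le_one)
          ((hf2c.mul hF'c).intervalIntegrable_of_Icc zero_le_one)
        intro x hx
        show cF * (g x) ^ 2 ≤ (g x) ^ 2 * F' x
        nlinarith [sq_nonneg (g x), (hF'bd x hx).1]
      rw [intervalIntegral.integral_const_mul] at h1
      exact h1
    have habsd : ∫ s in (0:ℝ)..1, |2 * g s * G 1 s| ≤ A + N1 := by
      have h1 : ∫ s in (0:ℝ)..1, |2 * g s * G 1 s|
          ≤ ∫ s in (0:ℝ)..1, ((g s) ^ 2 + (G 1 s) ^ 2) := by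
        apply intervalIntegral.integral_mono_on zero_le_one
          ((hdc.abs).intervalIntegrable_of_Icc zero_le_one)
          ((hf2c.add (hG1c.pow 2)).intervalIntegrable_of_Icc zero_le_one)
        intro x _
        show |2 * g x * G 1 x| ≤ (g x) ^ 2 + (G 1 x) ^ 2
        have e1 : |2 * g x * G 1 x| = 2 * |g x| * |G 1 x| := by
          rw [abs_mul, abs_mul, abs_two]
        rw [e1, ← sq_abs (g x), ← sq_abs (G 1 x)]
        nlinarith [sq_nonneg (|g x| - |G 1 x|)]
      rw [intervalIntegral.integral_add (f := fun s => (g s) ^ 2) (g := fun s => (G 1 s) ^ 2)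
        (hf2c.intervalIntegrable_of_Icc zero_le_one)
        ((hG1c.pow 2).intervalIntegrable_of_Icc zero_le_one)] at h1
      exact h1
    have hk1 : cF * A ≤ 1 / (N : ℝ) * (∑ i, (g (t i)) ^ 2) + D * (A + N1) := by
      have h1 : D * (∫ s in (0:ℝ)..1, |2 * g s * G 1 s|) ≤ D * (A + N1) :=
        mul_le_mul_of_nonneg_left habsd hD0
      linarith
    have hk2 : D * N1 ≤ C * D ^ δ * A + C * D ^ ((m:ℝ) * (1 - 2*δ)) * B := by
      rcases eq_or_lt_of_le hD0 with hDz | hDpos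
      · have h1 : (0:ℝ) < (m:ℝ) := by exact_mod_cast hm
        have h2 : (0:ℝ) < 1 - 2*δ := by linarith [hδ.2]
        rw [← hDz, Real.zero_rpow (ne_of_gt hδ.1),
          Real.zero_rpow (ne_of_gt (mul_pos h1 h2))]
        simp
      · set h := D ^ ((1 - δ)/2) with hhdef
        have hh0 : 0 < h := Real.rpow_pos_of_pos hDpos _
        have hh1 : h ≤ 1 := Real.rpow_le_one hD0 hD1 (by linarith [hδ.2])
        have hN1b : N1 ≤ C / h ^ 2 * A + C * h ^ (2 * (m-1)) * B :=
          hCprop hm G hGchain hGcont h hh0 hh1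
        have e1 : h ^ 2 = D ^ ((1:ℝ) - δ) := by
          rw [hhdef, ← Real.rpow_natCast (D ^ ((1 - δ)/2)) 2, ← Real.rpow_mul hD0]
          norm_num
        have e2 : h ^ (2 * (m-1)) = D ^ ((1 - δ) * ((m:ℝ) - 1)) := by
          rw [hhdef, ← Real.rpow_natCast (D ^ ((1 - δ)/2)) (2*(m-1)), ← Real.rpow_mul hD0]
          congr 1
          push_cast [Nat.cast_sub hm]
          ring
        have hmulδ : D ^ δ * D ^ ((1:ℝ) - δ) = D := by
          rw [← Real.rpow_add hDpos]
          norm_num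
        have hDe1 : (0:ℝ) < D ^ ((1:ℝ) - δ) := Real.rpow_pos_of_pos hDpos _
        have k2a : D * (C / h ^ 2 * A) = C * D ^ δ * A := by
          rw [e1]
          rw [show D * (C / D ^ ((1:ℝ) - δ) * A) = C * (D ^ δ * D ^ ((1:ℝ) - δ)) / D ^ ((1:ℝ) - δ) * A by rw [hmulδ]; ring]
          rw [mul_div_assoc, mul_div_cancel_right₀ _ hDe1.ne']
        have hmul2 : D ^ (1 + (1 - δ) * ((m:ℝ) - 1)) = D * D ^ ((1 - δ) * ((m:ℝ) - 1)) := by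
          rw [Real.rpow_add hDpos, Real.rpow_one]
        have k2b : D * (C * h ^ (2 * (m-1)) * B) = C * D ^ (1 + (1 - δ) * ((m:ℝ) - 1)) * B := by
          rw [e2, hmul2]
          ring
        have k2c : D ^ (1 + (1 - δ) * ((m:ℝ) - 1)) ≤ D ^ ((m:ℝ) * (1 - 2*δ)) := by
          apply Real.rpow_le_rpow_of_exponent_ge hDpos hD1
          have hm1 : (1:ℝ) ≤ (m:ℝ) := by exact_mod_cast hm
          nlinarith [hδ.1]
        calc D * N1 ≤ D * (C / h ^ 2 * A + C * h ^ (2 * (m-1)) * B) :=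
              mul_le_mul_of_nonneg_left hN1b hD0
          _ = D * (C / h ^ 2 * A) + D * (C * h ^ (2 * (m-1)) * B) := by ring
          _ = C * D ^ δ * A + C * D ^ (1 + (1 - δ) * ((m:ℝ) - 1)) * B := by
              rw [k2a, k2b]
          _ ≤ C * D ^ δ * A + C * D ^ ((m:ℝ) * (1 - 2*δ)) * B := by
              apply add_le_add le_rfl
              apply mul_le_mul_of_nonneg_right _ hB0
              exact mul_le_mul_of_nonneg_left k2c (by linarith)
    linarith [hkok, hlow, hk1, hk2]
end
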